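/- (Random scalar case, structural properties) Under the hypotheses that X has support N_n = {1,…,n} with binary partition random variables (A_⟨α⟩, ⟨α⟩ ∈ Ω), X* has support of size at most n, and (B_⟨α⟩, ⟨α⟩ ∈ Ω) satisfy H(B_⟨α⟩, ⟨α⟩ ∈ Δ) = H(A_⟨α⟩, ⟨α⟩ ∈ Δ) for every Δ ⊆ Ω and H(B_⟨α⟩ | X*) = 0 for every ⟨α⟩ ∈ Ω, the following hold: (1) the random variables B_⟨α⟩, ⟨α⟩ ∈ Ω, are pairwise distinct (H(B_⟨α⟩ | B_⟨β⟩) > 0 and H(B_⟨β⟩ | B_⟨α⟩) > 0 for ⟨α⟩ ≠ ⟨β⟩) and each has nonzero entropy; (2) the support of X* has size exactly n; (3) each B_⟨α⟩ takes exactly two values, i.e., is a binary partition random variable of X*; (4) every binary random variable B* with H(B* | X*) = 0 and H(B*) > 0 coincides with some B_⟨α⟩ in the sense that H(B* | B_⟨α⟩) = H(B_⟨α⟩ | B*) = 0; and (5) for each i ∈ N_n, B_⟨{i}⟩ is an indicator random variable of X*, i.e., it determines whether X* equals some particular element of its support. -/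

import Mathlib

open scoped BigOperators

/-- Probability of an event under a pmf `μ` on a finite outcome space. -/
noncomputable def probOf {Ω : Type*} [Fintype Ω] (μ : Ω → ℝ) (E : Set Ω) : ℝ :=
  ∑ ω, E.indicator μ ω

/-- Shannon entropy (in bits) of the random variable `X` on the finite
probability space `(Ω, μ)`. -/
noncomputable def shEntropy {Ω : Type*} {S : Type*} [Fintype Ω] (μ : Ω → ℝ) (X : Ω → S) : ℝ :=
  ∑ ω, μ ω * (- Real.logb 2 (probOf μ {ω' | X ω' = X ω}))

/-- Conditional Shannon entropy `H(Y | X)` (in bits). -/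
noncomputable def shCondEntropy {Ω S T : Type*} [Fintype Ω] (μ : Ω → ℝ)
    (Y : Ω → T) (X : Ω → S) : ℝ :=
  shEntropy μ (fun ω => (X ω, Y ω)) - shEntropy μ X

/-- The support of the random variable `X` (values taken with positive probability). -/
noncomputable def rvSupport {Ω S : Type*} [Fintype Ω] (μ : Ω → ℝ) (X : Ω → S) : Finset S := by
  classical exact (Finset.univ.filter fun ω => 0 < μ ω).image X

/-- `μ` is a probability mass function. -/
def IsPMF {Ω : Type*} [Fintype Ω] (μ : Ω → ℝ) : Prop :=
  (∀ ω, 0 ≤ μ ω) ∧ ∑ ω, μ ω = 1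

/-- A polymatroid on the finite ground set `Z`. -/
def IsPolymatroid {Z : Type*} [DecidableEq Z] (h : Finset Z → ℝ) : Prop :=
  h ∅ = 0 ∧ (∀ A : Finset Z, 0 ≤ h A) ∧ (∀ A B : Finset Z, A ⊆ B → h A ≤ h B) ∧
    ∀ A B : Finset Z, h (A ∩ B) + h (A ∪ B) ≤ h A + h B

/-- The binary partition random variable `A_⟨α⟩` of a random variable on
`Fin n` (the probability space is taken to be `Fin n` itself, with `X` the
identity): `A_⟨α⟩` records whether `X ∈ α` or `X ∈ αᶜ`.  Unordered partitions
`⟨α⟩ = {α, αᶜ}` are represented by the part `α` not containing the first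
element `0` (the paper's convention `1 ∉ α`). -/
def bpVar {n : ℕ} (α : Finset (Fin n)) : Fin n → Bool := fun x => decide (x ∈ α)

/-- The index set `Ω` of unordered binary partitions `⟨α⟩ = {α, αᶜ}` of
`{1, …, n}`, represented by the part `α` not containing the first element. -/
abbrev PartIdx (n : ℕ) [NeZero n] : Type :=
  {α : Finset (Fin n) // α.Nonempty ∧ 0 ∉ α}

set_option linter.unusedSectionVars false

/-- Functional dependence on the support: `X` determines `Y`. -/
def FnDep {Ω S T : Type*} [Fintype Ω] (μ : Ω → ℝ) (X : Ω → S) (Y : Ω → T) : Prop :=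
  ∀ ω ω', 0 < μ ω → 0 < μ ω' → X ω = X ω' → Y ω = Y ω'

section Infra

variable {Ω : Type*} [Fintype Ω] {μ : Ω → ℝ}

lemma probOf_nonneg (h0 : ∀ ω, 0 ≤ μ ω) (E : Set Ω) : 0 ≤ probOf μ E :=
  Finset.sum_nonneg fun ω _ => Set.indicator_nonneg (fun ω _ => h0 ω) ω

lemma probOf_mono (h0 : ∀ ω, 0 ≤ μ ω) {E F : Set Ω} (h : E ⊆ F) :
    probOf μ E ≤ probOf μ F :=
  Finset.sum_le_sum fun ω _ => Set.indicator_le_indicator_of_subset h (fun ω => h0 ω) ω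

lemma probOf_le_one (hμ : IsPMF μ) (E : Set Ω) : probOf μ E ≤ 1 := by
  rw [← hμ.2]
  exact Finset.sum_le_sum fun ω _ => Set.indicator_le_self' (fun ω _ => hμ.1 ω) ω

lemma le_probOf (h0 : ∀ ω, 0 ≤ μ ω) {E : Set Ω} {ω0 : Ω} (hmem : ω0 ∈ E) :
    μ ω0 ≤ probOf μ E := by
  have : E.indicator μ ω0 = μ ω0 := Set.indicator_of_mem hmem μ
  rw [← this]
  exact Finset.single_le_sum
    (fun ω _ => Set.indicator_nonneg (fun ω _ => h0 ω) ω) (Finset.mem_univ ω0)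

lemma one_le_probOf (hμ : IsPMF μ) {E : Set Ω} (h : ∀ ω, 0 < μ ω → ω ∈ E) :
    1 ≤ probOf μ E := by
  rw [← hμ.2]
  refine Finset.sum_le_sum fun ω _ => ?_
  rcases lt_or_eq_of_le (hμ.1 ω) with hpos | heq
  · rw [Set.indicator_of_mem (h ω hpos) μ]
  · rw [← heq]
    exact Set.indicator_nonneg (fun ω _ => hμ.1 ω) ω

lemma probOf_pos (h0 : ∀ ω, 0 ≤ μ ω) {E : Set Ω} {ω0 : Ω}
    (hmem : ω0 ∈ E) (hpos : 0 < μ ω0) : 0 < probOf μ E :=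
  lt_of_lt_of_le hpos (le_probOf h0 hmem)

lemma shEntropy_congr {S U : Type*} {X : Ω → S} {Y : Ω → U}
    (h : ∀ ω ω', X ω' = X ω ↔ Y ω' = Y ω) : shEntropy μ X = shEntropy μ Y := by
  unfold shEntropy
  refine Finset.sum_congr rfl fun ω _ => ?_
  have : {ω' | X ω' = X ω} = {ω' | Y ω' = Y ω} := Set.ext fun ω' => h ω ω'
  rw [this]

lemma shEntropy_nonneg (hμ : IsPMF μ) {S : Type*} (X : Ω → S) : 0 ≤ shEntropy μ X := by
  refine Finset.sum_nonneg fun ω _ => ?_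
  rcases lt_or_eq_of_le (hμ.1 ω) with hpos | heq
  · refine mul_nonneg (le_of_lt hpos) ?_
    rw [neg_nonneg]
    exact Real.logb_nonpos (by norm_num)
      (probOf_nonneg hμ.1 _) (probOf_le_one hμ _)
  · rw [← heq, zero_mul]

/-- rewrite the conditional entropy as a single sum -/
lemma shCondEntropy_eq_sum {S T : Type*} (Y : Ω → T) (X : Ω → S) :
    shCondEntropy μ Y X = ∑ ω, μ ω *
      (Real.logb 2 (probOf μ {ω' | X ω' = X ω}) -
       Real.logb 2 (probOf μ {ω' | (X ω', Y ω') = (X ω, Y ω)})) := by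
  unfold shCondEntropy shEntropy
  rw [← Finset.sum_sub_distrib]
  exact Finset.sum_congr rfl fun ω _ => by ring

lemma pair_event_subset {S T : Type*} (Y : Ω → T) (X : Ω → S) (ω : Ω) :
    {ω' | (X ω', Y ω') = (X ω, Y ω)} ⊆ {ω' | X ω' = X ω} := by
  intro ω' h
  exact congrArg Prod.fst h

lemma shCondEntropy_term_nonneg (hμ : IsPMF μ) {S T : Type*} (Y : Ω → T) (X : Ω → S) (ω : Ω) :
    0 ≤ μ ω * (Real.logb 2 (probOf μ {ω' | X ω' = X ω}) -
      Real.logb 2 (probOf μ {ω' | (X ω', Y ω') = (X ω, Y ω)})) := by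
  rcases lt_or_eq_of_le (hμ.1 ω) with hpos | heq
  · refine mul_nonneg (le_of_lt hpos) (sub_nonneg.2 ?_)
    have hpair : 0 < probOf μ {ω' | (X ω', Y ω') = (X ω, Y ω)} :=
      probOf_pos hμ.1 (by simp) hpos
    have hXp : 0 < probOf μ {ω' | X ω' = X ω} :=
      probOf_pos hμ.1 (by simp) hpos
    exact (Real.logb_le_logb (by norm_num) hpair hXp).2
      (probOf_mono hμ.1 (pair_event_subset Y X ω))
  · have h0 : μ ω = 0 := heq.symm
    rw [h0, zero_mul]

lemma shCondEntropy_nonneg (hμ : IsPMF μ) {S T : Type*} (Y : Ω → T) (X : Ω → S) :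
    0 ≤ shCondEntropy μ Y X := by
  rw [shCondEntropy_eq_sum]
  exact Finset.sum_nonneg fun ω _ => shCondEntropy_term_nonneg hμ Y X ω

lemma shCondEntropy_eq_zero_of_fnDep (hμ : IsPMF μ) {S T : Type*} {Y : Ω → T} {X : Ω → S}
    (h : FnDep μ X Y) : shCondEntropy μ Y X = 0 := by
  classical
  rw [shCondEntropy_eq_sum]
  refine Finset.sum_eq_zero fun ω _ => ?_
  rcases lt_or_eq_of_le (hμ.1 ω) with hpos | heq
  · have hset : probOf μ {ω' | (X ω', Y ω') = (X ω, Y ω)} = probOf μ {ω' | X ω' = X ω} := by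
      unfold probOf
      refine Finset.sum_congr rfl fun ω' _ => ?_
      rcases lt_or_eq_of_le (hμ.1 ω') with hpos' | heq'
      · by_cases hX : X ω' = X ω
        · have hY : Y ω' = Y ω := h ω' ω hpos' hpos hX
          have hm1 : ω' ∈ {ω'' | (X ω'', Y ω'') = (X ω, Y ω)} := by
            simp only [Set.mem_setOf_eq, Prod.mk.injEq]; exact ⟨hX, hY⟩
          have hm2 : ω' ∈ {ω'' | X ω'' = X ω} := hX
          rw [Set.indicator_of_mem hm1, Set.indicator_of_mem hm2]
        · have hm1 : ω' ∉ {ω'' | (X ω'', Y ω'') = (X ω, Y ω)} := by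
            simp only [Set.mem_setOf_eq, Prod.mk.injEq, not_and]
            exact fun h' => absurd h' hX
          have hm2 : ω' ∉ {ω'' | X ω'' = X ω} := hX
          rw [Set.indicator_of_notMem hm1, Set.indicator_of_notMem hm2]
      · have h0 : μ ω' = 0 := heq'.symm
        rw [Set.indicator_apply, Set.indicator_apply]
        split <;> split <;> simp [h0]
    rw [hset, sub_self, mul_zero]
  · have h0 : μ ω = 0 := heq.symm
    rw [h0, zero_mul]

lemma shCondEntropy_pos (hμ : IsPMF μ) {S T : Type*} {Y : Ω → T} {X : Ω → S}
    {ω1 ω2 : Ω} (h1 : 0 < μ ω1) (h2 : 0 < μ ω2) (hX : X ω1 = X ω2) (hY : Y ω1 ≠ Y ω2) :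
    0 < shCondEntropy μ Y X := by
  rw [shCondEntropy_eq_sum]
  refine Finset.sum_pos' (fun ω _ => shCondEntropy_term_nonneg hμ Y X ω) ⟨ω1, Finset.mem_univ _, ?_⟩
  have hpairpos : 0 < probOf μ {ω' | (X ω', Y ω') = (X ω1, Y ω1)} :=
    probOf_pos hμ.1 (by simp) h1
  have hlt : probOf μ {ω' | (X ω', Y ω') = (X ω1, Y ω1)} < probOf μ {ω' | X ω' = X ω1} := by
    have hle : probOf μ {ω' | (X ω', Y ω') = (X ω1, Y ω1)} + μ ω2 ≤
        probOf μ {ω' | X ω' = X ω1} := by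
      classical
      unfold probOf
      have h2mem : ω2 ∈ {ω' | X ω' = X ω1} := by
        simp only [Set.mem_setOf_eq]; exact hX.symm
      have h2not : ω2 ∉ {ω' | (X ω', Y ω') = (X ω1, Y ω1)} := by
        simp only [Set.mem_setOf_eq, Prod.mk.injEq, not_and]
        exact fun _ h => hY h.symm
      calc (∑ ω, Set.indicator {ω' | (X ω', Y ω') = (X ω1, Y ω1)} μ ω) + μ ω2
          = ∑ ω, (Set.indicator {ω' | (X ω', Y ω') = (X ω1, Y ω1)} μ ω
              + if ω = ω2 then μ ω2 else 0) := by
            rw [Finset.sum_add_distrib, Finset.sum_ite_eq' Finset.univ ω2 (fun _ => μ ω2)]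
            simp
        _ ≤ ∑ ω, Set.indicator {ω' | X ω' = X ω1} μ ω := by
            refine Finset.sum_le_sum fun ω _ => ?_
            by_cases hω : ω = ω2
            · subst hω
              rw [Set.indicator_of_notMem h2not, Set.indicator_of_mem h2mem]
              simp
            · simp only [hω, if_false, add_zero]
              exact Set.indicator_le_indicator_of_subset (pair_event_subset Y X ω1)
                (fun ω => hμ.1 ω) ω
    linarith
  have := Real.logb_lt_logb (b := 2) (by norm_num) hpairpos hlt
  have hsub : 0 < Real.logb 2 (probOf μ {ω' | X ω' = X ω1}) -
      Real.logb 2 (probOf μ {ω' | (X ω', Y ω') = (X ω1, Y ω1)}) := by linarith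
  exact mul_pos h1 hsub

/-- Main equivalence: zero conditional entropy ↔ functional dependence. -/
lemma fnDep_iff (hμ : IsPMF μ) {S T : Type*} (Y : Ω → T) (X : Ω → S) :
    FnDep μ X Y ↔ shCondEntropy μ Y X = 0 := by
  constructor
  · exact shCondEntropy_eq_zero_of_fnDep hμ
  · intro h
    by_contra hnd
    simp only [FnDep, not_forall] at hnd
    obtain ⟨ω, ω', h1, h2, hX, hY⟩ := hnd
    exact absurd h (ne_of_gt (shCondEntropy_pos hμ h1 h2 hX hY))

lemma exists_pos_of_pmf (hμ : IsPMF μ) : ∃ ω, 0 < μ ω := by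
  by_contra h
  push_neg at h
  have : ∑ ω, μ ω ≤ 0 := Finset.sum_nonpos fun ω _ => h ω
  rw [hμ.2] at this; linarith

lemma mem_rvSupport {S : Type*} {X : Ω → S} {ω : Ω} (h : 0 < μ ω) :
    X ω ∈ rvSupport μ X := by
  simp only [rvSupport, Finset.mem_image, Finset.mem_filter]
  exact ⟨ω, ⟨Finset.mem_univ _, h⟩, rfl⟩

lemma rvSupport_eq {S : Type*} {X : Ω → S} {x : S} (h : x ∈ rvSupport μ X) :
    ∃ ω, 0 < μ ω ∧ X ω = x := by
  simp only [rvSupport, Finset.mem_image, Finset.mem_filter] at h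
  obtain ⟨ω, hmem, rfl⟩ := h
  exact ⟨ω, hmem.2, rfl⟩

end Infra

section Counting

variable {Ω : Type*} [Fintype Ω] {μ : Ω → ℝ} {S T U : Type*}

lemma fnDep_trans {X : Ω → S} {Y : Ω → T} {Z : Ω → U}
    (h1 : FnDep μ X Y) (h2 : FnDep μ Y Z) : FnDep μ X Z :=
  fun ω ω' hω hω' hXY => h2 ω ω' hω hω' (h1 ω ω' hω hω' hXY)

open Classical in
noncomputable def depMap (hμ : IsPMF μ) (X : Ω → S) (Y : Ω → T) : S → T := fun x =>
  if h : ∃ ω, 0 < μ ω ∧ X ω = x then Y h.choose else Y (exists_pos_of_pmf hμ).choose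

lemma depMap_spec (hμ : IsPMF μ) {X : Ω → S} {Y : Ω → T} (hd : FnDep μ X Y)
    {ω : Ω} (hω : 0 < μ ω) : depMap hμ X Y (X ω) = Y ω := by
  unfold depMap
  have h : ∃ ω', 0 < μ ω' ∧ X ω' = X ω := ⟨ω, hω, rfl⟩
  rw [dif_pos h]
  exact hd h.choose ω h.choose_spec.1 hω h.choose_spec.2

lemma supp_subset_image (hμ : IsPMF μ) {X : Ω → S} {Y : Ω → T} (hd : FnDep μ X Y) :
    haveI := Classical.decEq T
    rvSupport μ Y ⊆ (rvSupport μ X).image (depMap hμ X Y) := by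
  classical
  intro y hy
  obtain ⟨ω, hω, rfl⟩ := rvSupport_eq hy
  exact Finset.mem_image.2 ⟨X ω, mem_rvSupport hω, depMap_spec hμ hd hω⟩

lemma card_le_of_fnDep (hμ : IsPMF μ) {X : Ω → S} {Y : Ω → T} (hd : FnDep μ X Y) :
    (rvSupport μ Y).card ≤ (rvSupport μ X).card := by
  classical
  exact le_trans (Finset.card_le_card (supp_subset_image hμ hd)) Finset.card_image_le

lemma card_lt_of_fnDep (hμ : IsPMF μ) {X : Ω → S} {Y : Ω → T} (hd : FnDep μ X Y)
    (hnd : ¬ FnDep μ Y X) : (rvSupport μ Y).card < (rvSupport μ X).card := by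
  classical
  simp only [FnDep, not_forall] at hnd
  obtain ⟨ω1, ω2, h1, h2, hYeq, hXne⟩ := hnd
  have hsub : rvSupport μ Y ⊆ ((rvSupport μ X).erase (X ω2)).image (depMap hμ X Y) := by
    intro y hy
    obtain ⟨ω, hω, rfl⟩ := rvSupport_eq hy
    by_cases hXc : X ω = X ω2
    · have : Y ω = Y ω2 := hd ω ω2 hω h2 hXc
      refine Finset.mem_image.2 ⟨X ω1, Finset.mem_erase.2 ⟨hXne, mem_rvSupport h1⟩, ?_⟩
      rw [depMap_spec hμ hd h1, hYeq, ← this]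
    · exact Finset.mem_image.2 ⟨X ω, Finset.mem_erase.2 ⟨hXc, mem_rvSupport hω⟩,
        depMap_spec hμ hd hω⟩
  have h2' := Finset.card_erase_lt_of_mem (mem_rvSupport (X := X) h2)
  calc (rvSupport μ Y).card ≤ ((rvSupport μ X).erase (X ω2)).card :=
        le_trans (Finset.card_le_card hsub) Finset.card_image_le
    _ < (rvSupport μ X).card := h2'

lemma fnDep_symm_of_card_le (hμ : IsPMF μ) {X : Ω → S} {Y : Ω → T} (hd : FnDep μ X Y)
    (hc : (rvSupport μ X).card ≤ (rvSupport μ Y).card) : FnDep μ Y X := by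
  by_contra hnd
  exact absurd hc (not_le.2 (card_lt_of_fnDep hμ hd hnd))

lemma card_supp_eq_of_mutual (hμ : IsPMF μ) {X : Ω → S} {Y : Ω → T}
    (h1 : FnDep μ X Y) (h2 : FnDep μ Y X) :
    (rvSupport μ X).card = (rvSupport μ Y).card :=
  le_antisymm (card_le_of_fnDep hμ h2) (card_le_of_fnDep hμ h1)

end Counting

section Infra2

variable {Ω : Type*} [Fintype Ω] {μ : Ω → ℝ} {S T U : Type*}

lemma probOf_add_le_one (hμ : IsPMF μ) {E : Set Ω} {ω2 : Ω} (h2 : ω2 ∉ E) :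
    probOf μ E + μ ω2 ≤ 1 := by
  classical
  rw [← hμ.2]
  unfold probOf
  calc (∑ ω, E.indicator μ ω) + μ ω2
      = ∑ ω, (E.indicator μ ω + if ω = ω2 then μ ω2 else 0) := by
        rw [Finset.sum_add_distrib, Finset.sum_ite_eq' Finset.univ ω2 (fun _ => μ ω2)]
        simp
    _ ≤ ∑ ω, μ ω := by
        refine Finset.sum_le_sum fun ω _ => ?_
        by_cases hω : ω = ω2
        · subst hω
          rw [Set.indicator_of_notMem h2]
          simp
        · simp only [hω, if_false, add_zero]
          exact Set.indicator_le_self' (fun ω _ => hμ.1 ω) ω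

lemma shEntropy_pos (hμ : IsPMF μ) {X : Ω → S} {ω1 ω2 : Ω}
    (h1 : 0 < μ ω1) (h2 : 0 < μ ω2) (hne : X ω1 ≠ X ω2) : 0 < shEntropy μ X := by
  unfold shEntropy
  refine Finset.sum_pos' ?_ ⟨ω1, Finset.mem_univ _, ?_⟩
  · intro ω _
    rcases lt_or_eq_of_le (hμ.1 ω) with hpos | heq
    · refine mul_nonneg (le_of_lt hpos) ?_
      rw [neg_nonneg]
      exact Real.logb_nonpos (by norm_num) (probOf_nonneg hμ.1 _) (probOf_le_one hμ _)
    · have h0 : μ ω = 0 := heq.symm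
      rw [h0, zero_mul]
  · have hem : ω2 ∉ {ω' | X ω' = X ω1} := fun hc => hne (hc : X ω2 = X ω1).symm
    have hlt : probOf μ {ω' | X ω' = X ω1} < 1 := by
      have := probOf_add_le_one hμ hem
      linarith
    have hpos : 0 < probOf μ {ω' | X ω' = X ω1} := probOf_pos hμ.1 (by simp) h1
    have : Real.logb 2 (probOf μ {ω' | X ω' = X ω1}) < 0 :=
      Real.logb_neg (by norm_num) hpos hlt
    have : 0 < - Real.logb 2 (probOf μ {ω' | X ω' = X ω1}) := by linarith
    exact mul_pos h1 this

lemma shEntropy_eq_zero_of_const (hμ : IsPMF μ) {X : Ω → S}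
    (h : ∀ ω ω', 0 < μ ω → 0 < μ ω' → X ω = X ω') : shEntropy μ X = 0 := by
  unfold shEntropy
  refine Finset.sum_eq_zero fun ω _ => ?_
  rcases lt_or_eq_of_le (hμ.1 ω) with hpos | heq
  · have h1 : probOf μ {ω' | X ω' = X ω} = 1 := by
      refine le_antisymm (probOf_le_one hμ _) ?_
      exact one_le_probOf hμ fun ω' hω' => h ω' ω hω' hpos
    rw [h1]
    simp
  · have h0 : μ ω = 0 := heq.symm
    rw [h0, zero_mul]

lemma exists_ne_of_shEntropy_pos (hμ : IsPMF μ) {X : Ω → S}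
    (h : 0 < shEntropy μ X) : ∃ ω ω', 0 < μ ω ∧ 0 < μ ω' ∧ X ω ≠ X ω' := by
  by_contra hc
  push_neg at hc
  have : shEntropy μ X = 0 :=
    shEntropy_eq_zero_of_const hμ fun ω ω' hω hω' => hc ω ω' hω hω'
  rw [this] at h
  exact lt_irrefl 0 h

/-- conditioning on a constant gives the plain entropy -/
lemma shCondEntropy_const (hμ : IsPMF μ) (Y : Ω → T) (C : Ω → U)
    (hC : ∀ ω ω', C ω = C ω') : shCondEntropy μ Y C = shEntropy μ Y := by
  unfold shCondEntropy
  have h1 : shEntropy μ (fun ω => (C ω, Y ω)) = shEntropy μ Y := by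
    refine shEntropy_congr fun ω ω' => ?_
    constructor
    · intro h; exact congrArg Prod.snd h
    · intro h; exact Prod.ext (hC ω' ω) h
  have h2 : shEntropy μ C = 0 := by
    unfold shEntropy
    refine Finset.sum_eq_zero fun ω _ => ?_
    have : probOf μ {ω' | C ω' = C ω} = 1 := by
      refine le_antisymm (probOf_le_one hμ _) (one_le_probOf hμ fun ω' _ => hC ω' ω)
    rw [this]
    simp
  rw [h1, h2, sub_zero]

lemma shEntropy_pair_congr {X : Ω → S} {Y : Ω → T} {X'' : Ω → U}
    (h : ∀ ω ω', X ω' = X ω ↔ X'' ω' = X'' ω) :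
    shEntropy μ (fun ω => (X ω, Y ω)) = shEntropy μ (fun ω => (X'' ω, Y ω)) := by
  refine shEntropy_congr fun ω ω' => ?_
  constructor
  · intro hh
    simp only [Prod.mk.injEq] at hh ⊢
    exact ⟨(h ω ω').1 hh.1, hh.2⟩
  · intro hh
    simp only [Prod.mk.injEq] at hh ⊢
    exact ⟨(h ω ω').2 hh.1, hh.2⟩

end Infra2

lemma bpVar_eq_iff {n : ℕ} (α : Finset (Fin n)) (x y : Fin n) :
    bpVar α x = bpVar α y ↔ (x ∈ α ↔ y ∈ α) := by
  simp [bpVar, decide_eq_decide]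

section Ctx

variable {n : ℕ} [NeZero n]

def sIdx (hn : 2 ≤ n) (i : Fin n) : PartIdx n :=
  if h : i = 0 then
    ⟨({0} : Finset (Fin n))ᶜ, ⟨⟨⟨1, by omega⟩, by
      simp only [Finset.mem_compl, Finset.mem_singleton]
      exact fun hc => absurd (congrArg Fin.val hc) (by simp)⟩, by simp⟩⟩
  else ⟨{i}, ⟨⟨i, Finset.mem_singleton_self i⟩, by
      simp only [Finset.mem_singleton]
      exact fun hc => h hc.symm⟩⟩

lemma sIdx_mem_iff (hn : 2 ≤ n) (i x : Fin n) :
    x ∈ (sIdx hn i).1 ↔ (if i = 0 then x ≠ 0 else x = i) := by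
  unfold sIdx
  split
  · rename_i h; subst h; simp
  · rename_i h; simp [h]

lemma sIdx_sep (hn : 2 ≤ n) (i x y : Fin n) :
    bpVar (sIdx hn i).1 x = bpVar (sIdx hn i).1 y ↔ (x = i ↔ y = i) := by
  rw [bpVar_eq_iff, sIdx_mem_iff, sIdx_mem_iff]
  by_cases h : i = 0
  · subst h; simp only [if_pos rfl]
    by_cases hx : x = 0 <;> by_cases hy : y = 0 <;> simp [hx, hy]
  · simp [h]

lemma sIdx_inj (hn : 3 ≤ n) {i j : Fin n} (h : sIdx (by omega) i = sIdx (by omega) j) :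
    i = j := by
  have h1 := congrArg Subtype.val h
  by_cases hi : i = 0 <;> by_cases hj : j = 0
  · rw [hi, hj]
  · exfalso
    rw [sIdx, sIdx, dif_pos hi, dif_neg hj] at h1
    simp only at h1
    have hcard := congrArg Finset.card h1
    rw [Finset.card_compl, Finset.card_singleton, Finset.card_singleton] at hcard
    simp only [Fintype.card_fin] at hcard
    omega
  · exfalso
    rw [sIdx, sIdx, dif_neg hi, dif_pos hj] at h1
    have hcard := congrArg Finset.card h1
    rw [Finset.card_singleton, Finset.card_compl, Finset.card_singleton] at hcard
    simp only [Fintype.card_fin] at hcard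
    omega
  · rw [sIdx, sIdx, dif_neg hi, dif_neg hj] at h1
    simpa using (Finset.singleton_injective h1)

variable {Ω' T : Type*} [Fintype Ω'] {ν : Ω' → ℝ} {γ : PartIdx n → Type*}

/-- The joint random variable of the `B`s over an index set `Δ`. -/
def tupleB (B : (a : PartIdx n) → Ω' → γ a) (Δ : Finset (PartIdx n)) :
    Ω' → ((x : {x // x ∈ Δ}) → γ x.1) := fun ω x => B x.1 ω

/-- The joint binary-partition variable over an index set `Δ` on the `p`-side. -/
def tupleA (Δ : Finset (PartIdx n)) : Fin n → ({x // x ∈ Δ} → Bool) :=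
  fun x a => bpVar a.1.1 x

/-- `a` is functionally determined by `Δ` on the `A`-side. -/
def DepOn (Δ : Finset (PartIdx n)) (a : PartIdx n) : Prop :=
  ∀ x y : Fin n, (∀ b ∈ Δ, bpVar b.1 x = bpVar b.1 y) → bpVar a.1 x = bpVar a.1 y

lemma not_depOn_of_witness {Δ : Finset (PartIdx n)} {a : PartIdx n} (x y : Fin n)
    (hagree : ∀ b ∈ Δ, bpVar b.1 x = bpVar b.1 y)
    (hdiff : bpVar a.1 x ≠ bpVar a.1 y) : ¬ DepOn Δ a :=
  fun h => hdiff (h x y hagree)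

variable (p : Fin n → ℝ) (B : (a : PartIdx n) → Ω' → γ a)

/-- Entropy transfer for conditional entropies (Lemma M). -/
lemma condTransfer
    (hBent : ∀ Δ : Finset (PartIdx n),
      shEntropy ν (fun ω (a : {x // x ∈ Δ}) => B a.1 ω) =
        shEntropy p (fun x (a : {x // x ∈ Δ}) => bpVar a.1.1 x))
    (Δ : Finset (PartIdx n)) (a : PartIdx n) :
    shCondEntropy ν (B a) (tupleB B Δ) = shCondEntropy p (bpVar a.1) (tupleA Δ) := by
  classical
  unfold shCondEntropy
  have h1 : shEntropy ν (fun ω => (tupleB B Δ ω, B a ω)) =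
      shEntropy ν (tupleB B (insert a Δ)) := by
    refine shEntropy_congr fun ω ω' => ?_
    constructor
    · intro h
      funext x
      obtain ⟨xv, hxmem⟩ := x
      rcases Finset.mem_insert.1 hxmem with rfl | hxΔ
      · exact congrArg Prod.snd h
      · exact congrFun (congrArg Prod.fst h) ⟨xv, hxΔ⟩
    · intro h
      refine Prod.ext ?_ ?_
      · funext y
        exact congrFun h ⟨y.1, Finset.mem_insert_of_mem y.2⟩
      · exact congrFun h ⟨a, Finset.mem_insert_self a Δ⟩
  have h2 : shEntropy p (fun x => (tupleA Δ x, bpVar a.1 x)) =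
      shEntropy p (tupleA (insert a Δ)) := by
    refine shEntropy_congr fun x x' => ?_
    constructor
    · intro h
      funext b
      obtain ⟨bv, hbmem⟩ := b
      rcases Finset.mem_insert.1 hbmem with rfl | hbΔ
      · exact congrArg Prod.snd h
      · exact congrFun (congrArg Prod.fst h) ⟨bv, hbΔ⟩
    · intro h
      refine Prod.ext ?_ ?_
      · funext b
        exact congrFun h ⟨b.1, Finset.mem_insert_of_mem b.2⟩
      · exact congrFun h ⟨a, Finset.mem_insert_self a Δ⟩
  rw [h1, h2]
  have e1 : shEntropy ν (tupleB B (insert a Δ)) = shEntropy p (tupleA (insert a Δ)) :=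
    hBent (insert a Δ)
  have e2 : shEntropy ν (tupleB B Δ) = shEntropy p (tupleA Δ) := hBent Δ
  rw [e1, e2]

lemma depOn_iff_fnDep (hν : IsPMF ν) (hppmf : IsPMF p) (hppos : ∀ i, 0 < p i)
    (hBent : ∀ Δ : Finset (PartIdx n),
      shEntropy ν (fun ω (a : {x // x ∈ Δ}) => B a.1 ω) =
        shEntropy p (fun x (a : {x // x ∈ Δ}) => bpVar a.1.1 x))
    (Δ : Finset (PartIdx n)) (a : PartIdx n) :
    FnDep ν (tupleB B Δ) (B a) ↔ DepOn Δ a := by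
  rw [fnDep_iff hν, condTransfer p B hBent, ← fnDep_iff hppmf]
  constructor
  · intro h x y hagree
    exact h x y (hppos x) (hppos y) (funext fun b => hagree b.1 b.2)
  · intro h x y _ _ heq
    exact h x y fun b hb => congrFun heq ⟨b, hb⟩

end Ctx

section Chain

variable {n : ℕ} [NeZero n] {Ω' T : Type*} [Fintype Ω'] {ν : Ω' → ℝ}
  {γ : PartIdx n → Type*}

variable (p : Fin n → ℝ) (B : (a : PartIdx n) → Ω' → γ a)

lemma fnDep_tuple_mono {Δ Δ' : Finset (PartIdx n)} (h : Δ ⊆ Δ') :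
    FnDep ν (tupleB B Δ') (tupleB B Δ) := by
  intro ω ω' _ _ heq
  funext x
  exact congrFun heq ⟨x.1, h x.2⟩

lemma fnDep_tuple_proj {Δ : Finset (PartIdx n)} {a : PartIdx n} (h : a ∈ Δ) :
    FnDep ν (tupleB B Δ) (B a) := by
  intro ω ω' _ _ heq
  exact congrFun heq ⟨a, h⟩

lemma fnDep_to_tuple_single (a : PartIdx n) :
    FnDep ν (B a) (tupleB B {a}) := by
  intro ω ω' _ _ heq
  funext x
  obtain ⟨xv, hx⟩ := x
  have : xv = a := Finset.mem_singleton.1 hx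
  subst this
  exact heq

lemma fnDep_Xstar_tuple (hν : IsPMF ν) (Xstar : Ω' → T)
    (hBfun : ∀ a : PartIdx n, shCondEntropy ν (B a) Xstar = 0)
    (Δ : Finset (PartIdx n)) :
    FnDep ν Xstar (tupleB B Δ) := by
  intro ω ω' h1 h2 heq
  funext x
  exact ((fnDep_iff hν (B x.1) Xstar).2 (hBfun x.1)) ω ω' h1 h2 heq

lemma card_supp_tuple_empty (hν : IsPMF ν) :
    (rvSupport ν (tupleB B (∅ : Finset (PartIdx n)))).card = 1 := by
  obtain ⟨ω0, hω0⟩ := exists_pos_of_pmf hν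
  refine le_antisymm ?_ ?_
  · refine Finset.card_le_one.2 fun x hx y hy => ?_
    obtain ⟨ω, _, rfl⟩ := rvSupport_eq hx
    obtain ⟨ω', _, rfl⟩ := rvSupport_eq hy
    funext z
    exact absurd z.2 (Finset.notMem_empty _)
  · exact Finset.card_pos.2 ⟨_, mem_rvSupport hω0⟩

lemma card_supp_single (hν : IsPMF ν) (a : PartIdx n) :
    (rvSupport ν (tupleB B {a})).card = (rvSupport ν (B a)).card :=
  card_supp_eq_of_mutual hν (fnDep_tuple_proj B (Finset.mem_singleton_self a))
    (fnDep_to_tuple_single B a)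

/-- The fundamental chain lemma: each strict step adds at least one support value. -/
lemma chainGe (hν : IsPMF ν) (hppmf : IsPMF p) (hppos : ∀ i, 0 < p i)
    (hBent : ∀ Δ : Finset (PartIdx n),
      shEntropy ν (fun ω (a : {x // x ∈ Δ}) => B a.1 ω) =
        shEntropy p (fun x (a : {x // x ∈ Δ}) => bpVar a.1.1 x))
    (hn : 2 ≤ n) (Δ0 : Finset (PartIdx n)) (I : Finset (Fin n))
    (hstep : ∀ J ⊆ I, ∀ j ∈ I, j ∉ J →
      ¬ DepOn (Δ0 ∪ J.image (sIdx hn)) (sIdx hn j)) :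
    (rvSupport ν (tupleB B Δ0)).card + I.card ≤
      (rvSupport ν (tupleB B (Δ0 ∪ I.image (sIdx hn)))).card := by
  classical
  induction I using Finset.induction_on with
  | empty =>
    rw [Finset.image_empty, Finset.union_empty]
    simp
  | @insert j I hjI ih =>
    have hstep' : ∀ J ⊆ I, ∀ j' ∈ I, j' ∉ J →
        ¬ DepOn (Δ0 ∪ J.image (sIdx hn)) (sIdx hn j') := fun J hJ j' hj' hj'J =>
      hstep J (hJ.trans (Finset.subset_insert j I)) j' (Finset.mem_insert_of_mem hj') hj'J
    have ihh := ih hstep'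
    have key : ¬ DepOn (Δ0 ∪ I.image (sIdx hn)) (sIdx hn j) :=
      hstep I (Finset.subset_insert j I) j (Finset.mem_insert_self j I) hjI
    have hnd : ¬ FnDep ν (tupleB B (Δ0 ∪ I.image (sIdx hn))) (B (sIdx hn j)) := by
      rw [depOn_iff_fnDep p B hν hppmf hppos hBent]
      exact key
    have hsetEq : Δ0 ∪ (insert j I).image (sIdx hn) =
        insert (sIdx hn j) (Δ0 ∪ I.image (sIdx hn)) := by
      rw [Finset.image_insert, Finset.union_insert]
    have hlt : (rvSupport ν (tupleB B (Δ0 ∪ I.image (sIdx hn)))).card <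
        (rvSupport ν (tupleB B (insert (sIdx hn j) (Δ0 ∪ I.image (sIdx hn))))).card := by
      refine card_lt_of_fnDep hν (fnDep_tuple_mono B (Finset.subset_insert _ _)) ?_
      intro hc
      exact hnd (fnDep_trans hc (fnDep_tuple_proj B (Finset.mem_insert_self _ _)))
    rw [hsetEq, Finset.card_insert_of_notMem hjI]
    omega

end Chain

section MainA

variable {n : ℕ} [NeZero n] {Ω' T : Type*} [Fintype Ω']
  (p : Fin n → ℝ) (ν : Ω' → ℝ) (Xstar : Ω' → T)
  {γ : PartIdx n → Type*} (B : (a : PartIdx n) → Ω' → γ a)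
  (hp : ∀ i, 0 < p i) (hsum : ∑ i, p i = 1)
  (hν0 : ∀ ω, 0 ≤ ν ω) (hν1 : ∑ ω, ν ω = 1)
  (hcard : (rvSupport ν Xstar).card ≤ n)
  (hBent : ∀ Δ : Finset (PartIdx n),
      shEntropy ν (fun ω (a : {x // x ∈ Δ}) => B a.1 ω) =
        shEntropy p (fun x (a : {x // x ∈ Δ}) => bpVar a.1.1 x))
  (hBfun : ∀ a : PartIdx n, shCondEntropy ν (B a) Xstar = 0)

lemma distinct_witness {a b : PartIdx n} (hab : a ≠ b) :
    ∃ x y : Fin n, (x ∈ b.1 ↔ y ∈ b.1) ∧ ¬(x ∈ a.1 ↔ y ∈ a.1) := by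
  by_contra hc
  push_neg at hc
  have hc' : ∀ x y : Fin n, (x ∈ b.1 ↔ y ∈ b.1) → (x ∈ a.1 ↔ y ∈ a.1) := by
    intro x y h
    by_contra hne
    exact hne (hc x y h)
  have hsub : ∀ x, x ∉ b.1 → x ∉ a.1 := by
    intro x hx
    have h0 : (x ∈ b.1 ↔ (0 : Fin n) ∈ b.1) := by
      constructor
      · intro h; exact absurd h hx
      · intro h; exact absurd h b.2.2
    intro hxa
    exact a.2.2 ((hc' x 0 h0).1 hxa)
  obtain ⟨b0, hb0⟩ := b.2.1
  by_cases hb0a : b0 ∈ a.1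
  · apply hab
    apply Subtype.ext
    apply Finset.ext
    intro x
    constructor
    · intro hxa
      by_contra hxb
      exact hsub x hxb hxa
    · intro hxb
      have hiff : (x ∈ b.1 ↔ b0 ∈ b.1) := by simp [hxb, hb0]
      exact (hc' x b0 hiff).2 hb0a
  · obtain ⟨a0, ha0⟩ := a.2.1
    by_cases ha0b : a0 ∈ b.1
    · have hiff : (a0 ∈ b.1 ↔ b0 ∈ b.1) := by simp [ha0b, hb0]
      exact hb0a ((hc' a0 b0 hiff).1 ha0)
    · exact hsub a0 ha0b ha0

lemma tuple_single_iff (b : PartIdx n) :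
    ∀ ω ω', B b ω' = B b ω ↔ tupleB B {b} ω' = tupleB B {b} ω := by
  intro ω ω'
  constructor
  · intro h
    funext x
    obtain ⟨xv, hx⟩ := x
    have hxb : xv = b := Finset.mem_singleton.1 hx
    subst hxb
    exact h
  · intro h
    exact congrFun h ⟨b, Finset.mem_singleton_self b⟩

include hBent in
lemma shCond_pair_transfer (a b : PartIdx n) :
    shCondEntropy ν (B a) (B b) = shCondEntropy p (bpVar a.1) (tupleA {b}) := by
  have e1 : shCondEntropy ν (B a) (B b) = shCondEntropy ν (B a) (tupleB B {b}) := by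
    unfold shCondEntropy
    rw [shEntropy_pair_congr (X := B b) (X'' := tupleB B {b}) (Y := B a)
      (tuple_single_iff B b), shEntropy_congr (tuple_single_iff B b)]
  rw [e1, condTransfer p B hBent {b} a]

include hp hsum hBent in
lemma shCond_pair_pos {a b : PartIdx n} (hab : a ≠ b) :
    0 < shCondEntropy ν (B a) (B b) := by
  have hpp : IsPMF p := ⟨fun i => (hp i).le, hsum⟩
  rw [shCond_pair_transfer p ν B hBent a b]
  obtain ⟨x, y, hxy1, hxy2⟩ := distinct_witness hab
  refine shCondEntropy_pos hpp (hp x) (hp y) ?_ ?_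
  · funext bb
    obtain ⟨bv, hbv⟩ := bb
    have : bv = b := Finset.mem_singleton.1 hbv
    subst this
    exact (bpVar_eq_iff _ _ _).2 hxy1
  · intro hceq
    exact hxy2 ((bpVar_eq_iff _ _ _).1 hceq)

include hp hsum hν0 hν1 hBent in
lemma entB_transfer (a : PartIdx n) :
    shEntropy ν (B a) = shEntropy p (bpVar a.1) := by
  have hνp : IsPMF ν := ⟨hν0, hν1⟩
  have hpp : IsPMF p := ⟨fun i => (hp i).le, hsum⟩
  have hconstB : ∀ ω ω' : Ω', tupleB B (∅ : Finset (PartIdx n)) ω = tupleB B ∅ ω' :=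
    fun ω ω' => funext fun x => absurd x.2 (Finset.notMem_empty _)
  have hconstA : ∀ x x' : Fin n, tupleA (∅ : Finset (PartIdx n)) x = tupleA ∅ x' :=
    fun x x' => funext fun b => absurd b.2 (Finset.notMem_empty _)
  calc shEntropy ν (B a) = shCondEntropy ν (B a) (tupleB B (∅ : Finset (PartIdx n))) :=
        (shCondEntropy_const hνp (B a) _ hconstB).symm
    _ = shCondEntropy p (bpVar a.1) (tupleA ∅) := condTransfer p B hBent ∅ a
    _ = shEntropy p (bpVar a.1) := shCondEntropy_const hpp _ _ hconstA

include hp hsum hν0 hν1 hBent in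
lemma entB_pos (a : PartIdx n) : 0 < shEntropy ν (B a) := by
  have hpp : IsPMF p := ⟨fun i => (hp i).le, hsum⟩
  rw [entB_transfer p ν B hp hsum hν0 hν1 hBent a]
  obtain ⟨a0, ha0⟩ := a.2.1
  refine shEntropy_pos hpp (hp a0) (hp 0) ?_
  intro hceq
  exact a.2.2 (((bpVar_eq_iff _ a0 0).1 hceq).1 ha0)

include hp hsum hν0 hν1 hBent in
lemma nonconstB (a : PartIdx n) :
    ∃ ω ω', 0 < ν ω ∧ 0 < ν ω' ∧ B a ω ≠ B a ω' := by
  have hνp : IsPMF ν := ⟨hν0, hν1⟩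
  exact exists_ne_of_shEntropy_pos hνp (entB_pos p ν B hp hsum hν0 hν1 hBent a)

include hp hsum hν0 hν1 hcard hBent hBfun in
lemma cardS_eq (hn : 2 ≤ n) : (rvSupport ν Xstar).card = n := by
  classical
  have hνp : IsPMF ν := ⟨hν0, hν1⟩
  have hpp : IsPMF p := ⟨fun i => (hp i).le, hsum⟩
  set I : Finset (Fin n) := Finset.univ.erase 0 with hI
  have hstep : ∀ J ⊆ I, ∀ j ∈ I, j ∉ J →
      ¬ DepOn ((∅ : Finset (PartIdx n)) ∪ J.image (sIdx hn)) (sIdx hn j) := by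
    intro J hJ j hjI hjJ
    refine not_depOn_of_witness (0 : Fin n) j ?_ ?_
    · intro b hb
      rcases Finset.mem_union.1 hb with h0 | hb'
      · exact absurd h0 (Finset.notMem_empty b)
      · obtain ⟨i, hiJ, rfl⟩ := Finset.mem_image.1 hb'
        have hi0 : i ≠ 0 := (Finset.mem_erase.1 (hJ hiJ)).1
        have h1 : (0 : Fin n) ≠ i := fun hceq => hi0 hceq.symm
        have h2 : j ≠ i := fun hceq => hjJ (hceq ▸ hiJ)
        exact (sIdx_sep hn i 0 j).2 (by simp [h1, h2])
    · intro hceq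
      have h0j : (0 : Fin n) = j := by simpa using (sIdx_sep hn j 0 j).1 hceq
      exact (Finset.mem_erase.1 hjI).1 h0j.symm
  have hchain := chainGe p B hνp hpp hp hBent hn ∅ I hstep
  rw [Finset.empty_union] at hchain
  have h1 : (rvSupport ν (tupleB B (∅ : Finset (PartIdx n)))).card = 1 :=
    card_supp_tuple_empty B hνp
  have hIc : I.card = n - 1 := by
    rw [hI, Finset.card_erase_of_mem (Finset.mem_univ 0), Finset.card_univ, Fintype.card_fin]
  have hup : (rvSupport ν (tupleB B (I.image (sIdx hn)))).card ≤ (rvSupport ν Xstar).card :=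
    card_le_of_fnDep hνp (fnDep_Xstar_tuple B hνp Xstar hBfun _)
  omega

include hp hsum hν0 hν1 hcard hBent hBfun in
lemma cardB2 (hn : 2 ≤ n) (a : PartIdx n) : (rvSupport ν (B a)).card = 2 := by
  classical
  have hνp : IsPMF ν := ⟨hν0, hν1⟩
  have hpp : IsPMF p := ⟨fun i => (hp i).le, hsum⟩
  obtain ⟨a0, ha0⟩ := a.2.1
  have h0α : (0 : Fin n) ∉ a.1 := a.2.2
  set I : Finset (Fin n) := (a.1.erase a0) ∪ ((a.1)ᶜ.erase 0) with hI
  have ha0I : a0 ∉ I := by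
    rw [hI]
    intro hceq
    rcases Finset.mem_union.1 hceq with h1 | h2
    · exact (Finset.mem_erase.1 h1).1 rfl
    · exact (Finset.mem_compl.1 (Finset.mem_of_mem_erase h2)) ha0
  have h0I : (0 : Fin n) ∉ I := by
    rw [hI]
    intro hceq
    rcases Finset.mem_union.1 hceq with h1 | h2
    · exact h0α (Finset.mem_of_mem_erase h1)
    · exact (Finset.mem_erase.1 h2).1 rfl
  have hstep : ∀ J ⊆ I, ∀ j ∈ I, j ∉ J →
      ¬ DepOn (({a} : Finset (PartIdx n)) ∪ J.image (sIdx hn)) (sIdx hn j) := by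
    intro J hJ j hjI hjJ
    set x : Fin n := if j ∈ a.1 then a0 else 0 with hx
    have hxside : x ∈ a.1 ↔ j ∈ a.1 := by
      by_cases hjα : j ∈ a.1 <;> simp [hx, hjα, ha0, h0α]
    have hxI : x ∉ I := by
      by_cases hjα : j ∈ a.1 <;> simp [hx, hjα, ha0I, h0I]
    have hxj : x ≠ j := fun hceq => hxI (hceq ▸ hjI)
    refine not_depOn_of_witness x j ?_ ?_
    · intro b hb
      rcases Finset.mem_union.1 hb with hb1 | hb2
      · have hba : b = a := Finset.mem_singleton.1 hb1
        subst hba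
        exact (bpVar_eq_iff _ _ _).2 hxside
      · obtain ⟨i, hiJ, rfl⟩ := Finset.mem_image.1 hb2
        have hxi : x ≠ i := fun hceq => (hceq ▸ hxI) (hJ hiJ)
        have hji : j ≠ i := fun hceq => hjJ (hceq ▸ hiJ)
        exact (sIdx_sep hn i x j).2 (by simp [hxi, hji])
    · intro hceq
      exact hxj (by simpa using (sIdx_sep hn j x j).1 hceq)
  have hchain := chainGe p B hνp hpp hp hBent hn {a} I hstep
  have hIcard : I.card = n - 2 := by
    have hdisj : Disjoint (a.1.erase a0) ((a.1)ᶜ.erase 0) :=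
      Finset.disjoint_left.2 fun x hx1 hx2 =>
        (Finset.mem_compl.1 (Finset.mem_of_mem_erase hx2)) (Finset.mem_of_mem_erase hx1)
    rw [hI, Finset.card_union_of_disjoint hdisj, Finset.card_erase_of_mem ha0,
      Finset.card_erase_of_mem (Finset.mem_compl.2 h0α), Finset.card_compl, Fintype.card_fin]
    have h1 : 1 ≤ a.1.card := Finset.card_pos.2 ⟨a0, ha0⟩
    have h2 : a.1.card ≤ n - 1 := by
      have hss : a.1 ⊆ Finset.univ.erase 0 := fun x hx =>
        Finset.mem_erase.2 ⟨fun hceq => h0α (hceq ▸ hx), Finset.mem_univ x⟩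
      calc a.1.card ≤ (Finset.univ.erase (0 : Fin n)).card := Finset.card_le_card hss
        _ = n - 1 := by
          rw [Finset.card_erase_of_mem (Finset.mem_univ 0), Finset.card_univ, Fintype.card_fin]
    omega
  have hsingle := card_supp_single B hνp a
  have hup : (rvSupport ν (tupleB B ({a} ∪ I.image (sIdx hn)))).card ≤
      (rvSupport ν Xstar).card :=
    card_le_of_fnDep hνp (fnDep_Xstar_tuple B hνp Xstar hBfun _)
  obtain ⟨ω, ω', hω, hω', hne⟩ := nonconstB p ν B hp hsum hν0 hν1 hBent a
  have h2le : 2 ≤ (rvSupport ν (B a)).card :=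
    Finset.one_lt_card.2 ⟨B a ω, mem_rvSupport hω, B a ω', mem_rvSupport hω', hne⟩
  omega

end MainA

section MainB

variable {n : ℕ} [NeZero n] {Ω' T : Type*} [Fintype Ω']
  (p : Fin n → ℝ) (ν : Ω' → ℝ) (Xstar : Ω' → T)
  {γ : PartIdx n → Type*} (B : (a : PartIdx n) → Ω' → γ a)
  (hp : ∀ i, 0 < p i) (hsum : ∑ i, p i = 1)
  (hν0 : ∀ ω, 0 ≤ ν ω) (hν1 : ∑ ω, ν ω = 1)
  (hcard : (rvSupport ν Xstar).card ≤ n)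
  (hBent : ∀ Δ : Finset (PartIdx n),
      shEntropy ν (fun ω (a : {x // x ∈ Δ}) => B a.1 ω) =
        shEntropy p (fun x (a : {x // x ∈ Δ}) => bpVar a.1.1 x))
  (hBfun : ∀ a : PartIdx n, shCondEntropy ν (B a) Xstar = 0)

/-- the function through which `B a` factors via `Xstar` -/
noncomputable def gB (hν0 : ∀ ω, 0 ≤ ν ω) (hν1 : ∑ ω, ν ω = 1) (a : PartIdx n) : T → γ a :=
  depMap (μ := ν) ⟨hν0, hν1⟩ Xstar (B a)

include hBfun in
lemma gB_spec (a : PartIdx n) {ω : Ω'} (hω : 0 < ν ω) :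
    gB ν Xstar B hν0 hν1 a (Xstar ω) = B a ω :=
  depMap_spec ⟨hν0, hν1⟩ ((fnDep_iff ⟨hν0, hν1⟩ (B a) Xstar).2 (hBfun a)) hω

lemma supp_eq_image {U : Type*} [DecidableEq U] (W : Ω' → U) (g' : T → U)
    (hg : ∀ ω, 0 < ν ω → g' (Xstar ω) = W ω) :
    rvSupport ν W = (rvSupport ν Xstar).image g' := by
  apply Finset.ext
  intro u
  constructor
  · intro hu
    obtain ⟨ω, hω, rfl⟩ := rvSupport_eq hu
    exact Finset.mem_image.2 ⟨Xstar ω, mem_rvSupport hω, hg ω hω⟩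
  · intro hu
    obtain ⟨t, ht, rfl⟩ := Finset.mem_image.1 hu
    obtain ⟨ω, hω, rfl⟩ := rvSupport_eq ht
    rw [hg ω hω]
    exact mem_rvSupport hω

lemma exists_not_mem_of_card_lt {K : Finset (Fin n)} (h : K.card < n) : ∃ x, x ∉ K := by
  by_contra hc
  push_neg at hc
  have hsub : (Finset.univ : Finset (Fin n)) ⊆ K := fun x _ => hc x
  have := Finset.card_le_card hsub
  rw [Finset.card_univ, Fintype.card_fin] at this
  omega

lemma eq_of_two_values {β : Type*} {imgs : Finset β} (h2 : imgs.card = 2) {x y z : β}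
    (hx : x ∈ imgs) (hy : y ∈ imgs) (hz : z ∈ imgs) (hxz : x ≠ z) (hyz : y ≠ z) : x = y := by
  classical
  obtain ⟨u, v, huv, rfl⟩ := Finset.card_eq_two.1 h2
  simp only [Finset.mem_insert, Finset.mem_singleton] at hx hy hz
  rcases hx with rfl | rfl <;> rcases hy with rfl | rfl <;> rcases hz with h | h <;>
    first | rfl | (exfalso; tauto)

include hp hsum hν0 hν1 hcard hBent hBfun in
lemma card_pair_three (hn : 2 ≤ n) (hn3 : 3 ≤ n) {i j : Fin n} (hij : i ≠ j) :
    (rvSupport ν (tupleB B (({i, j} : Finset (Fin n)).image (sIdx hn)))).card = 3 := by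
  classical
  have hνp : IsPMF ν := ⟨hν0, hν1⟩
  have hpp : IsPMF p := ⟨fun i => (hp i).le, hsum⟩
  have hc2 : ({i, j} : Finset (Fin n)).card = 2 := by
    rw [Finset.card_insert_of_notMem (by simp [hij]), Finset.card_singleton]
  -- lower bound
  have hstepL : ∀ J ⊆ ({i, j} : Finset (Fin n)), ∀ j' ∈ ({i, j} : Finset (Fin n)), j' ∉ J →
      ¬ DepOn ((∅ : Finset (PartIdx n)) ∪ J.image (sIdx hn)) (sIdx hn j') := by
    intro J hJ j' hj' hj'J
    have hKlt : (insert j' J).card < n := by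
      have hsub : insert j' J ⊆ ({i, j} : Finset (Fin n)) := Finset.insert_subset hj' hJ
      have := Finset.card_le_card hsub
      omega
    obtain ⟨x, hx⟩ := exists_not_mem_of_card_lt hKlt
    have hxj' : x ≠ j' := fun hceq => hx (hceq ▸ Finset.mem_insert_self j' J)
    have hxJ : x ∉ J := fun hceq => hx (Finset.mem_insert_of_mem hceq)
    refine not_depOn_of_witness x j' ?_ ?_
    · intro b hb
      rcases Finset.mem_union.1 hb with h0 | hb'
      · exact absurd h0 (Finset.notMem_empty b)
      · obtain ⟨i', hi'J, rfl⟩ := Finset.mem_image.1 hb'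
        have h1 : x ≠ i' := fun hceq => hxJ (hceq ▸ hi'J)
        have h2 : j' ≠ i' := fun hceq => hj'J (hceq ▸ hi'J)
        exact (sIdx_sep hn i' x j').2 (by simp [h1, h2])
    · intro hceq
      exact hxj' (by simpa using (sIdx_sep hn j' x j').1 hceq)
  have hlow := chainGe p B hνp hpp hp hBent hn ∅ {i, j} hstepL
  rw [Finset.empty_union] at hlow
  have h1 : (rvSupport ν (tupleB B (∅ : Finset (PartIdx n)))).card = 1 :=
    card_supp_tuple_empty B hνp
  -- upper bound
  obtain ⟨x0, hx0⟩ := exists_not_mem_of_card_lt (K := ({i, j} : Finset (Fin n))) (by omega)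
  have hI'card : (Finset.univ \ insert x0 ({i, j} : Finset (Fin n))).card = n - 3 := by
    rw [Finset.card_sdiff_of_subset (Finset.subset_univ _), Finset.card_univ, Fintype.card_fin,
      Finset.card_insert_of_notMem hx0, hc2]
  have hstepU : ∀ J ⊆ Finset.univ \ insert x0 ({i, j} : Finset (Fin n)),
      ∀ j' ∈ Finset.univ \ insert x0 ({i, j} : Finset (Fin n)), j' ∉ J →
      ¬ DepOn ((({i, j} : Finset (Fin n)).image (sIdx hn)) ∪ J.image (sIdx hn)) (sIdx hn j') := by
    intro J hJ j' hj' hj'J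
    have hj'm := Finset.mem_sdiff.1 hj'
    have hj'x0 : j' ≠ x0 := fun hceq => hj'm.2 (by
      rw [hceq]; exact Finset.mem_insert_self x0 _)
    have hj'ij : j' ∉ ({i, j} : Finset (Fin n)) := fun hceq =>
      hj'm.2 (Finset.mem_insert_of_mem hceq)
    have hx0J : x0 ∉ J := fun hceq => (Finset.mem_sdiff.1 (hJ hceq)).2
      (Finset.mem_insert_self x0 _)
    refine not_depOn_of_witness x0 j' ?_ ?_
    · intro b hb
      rcases Finset.mem_union.1 hb with hb1 | hb2
      · obtain ⟨i', hi', rfl⟩ := Finset.mem_image.1 hb1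
        have h1 : x0 ≠ i' := fun hceq => hx0 (hceq ▸ hi')
        have h2 : j' ≠ i' := fun hceq => hj'ij (hceq ▸ hi')
        exact (sIdx_sep hn i' x0 j').2 (by simp [h1, h2])
      · obtain ⟨i', hi', rfl⟩ := Finset.mem_image.1 hb2
        have h1 : x0 ≠ i' := fun hceq => hx0J (hceq ▸ hi')
        have h2 : j' ≠ i' := fun hceq => hj'J (hceq ▸ hi')
        exact (sIdx_sep hn i' x0 j').2 (by simp [h1, h2])
    · intro hceq
      exact (fun hcc : x0 = j' => hj'x0 hcc.symm) (by simpa using (sIdx_sep hn j' x0 j').1 hceq)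
  have hupchain := chainGe p B hνp hpp hp hBent hn (({i, j} : Finset (Fin n)).image (sIdx hn))
    (Finset.univ \ insert x0 ({i, j} : Finset (Fin n))) hstepU
  have hup : (rvSupport ν (tupleB B ((({i, j} : Finset (Fin n)).image (sIdx hn)) ∪
      (Finset.univ \ insert x0 ({i, j} : Finset (Fin n))).image (sIdx hn)))).card ≤
      (rvSupport ν Xstar).card :=
    card_le_of_fnDep hνp (fnDep_Xstar_tuple B hνp Xstar hBfun _)
  have hupmono : (rvSupport ν (tupleB B ((({i, j} : Finset (Fin n)).image (sIdx hn))))).card ≤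
      (rvSupport ν (tupleB B ((({i, j} : Finset (Fin n)).image (sIdx hn)) ∪
      (Finset.univ \ insert x0 ({i, j} : Finset (Fin n))).image (sIdx hn)))).card :=
    card_le_of_fnDep hνp (fnDep_tuple_mono B Finset.subset_union_left)
  omega

end MainB

section MainC

variable {n : ℕ} [NeZero n] {Ω' T : Type*} [Fintype Ω']
  (p : Fin n → ℝ) (ν : Ω' → ℝ) (Xstar : Ω' → T)
  {γ : PartIdx n → Type*} (B : (a : PartIdx n) → Ω' → γ a)
  (hp : ∀ i, 0 < p i) (hsum : ∑ i, p i = 1)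
  (hν0 : ∀ ω, 0 ≤ ν ω) (hν1 : ∑ ω, ν ω = 1)
  (hcard : (rvSupport ν Xstar).card ≤ n)
  (hBent : ∀ Δ : Finset (PartIdx n),
      shEntropy ν (fun ω (a : {x // x ∈ Δ}) => B a.1 ω) =
        shEntropy p (fun x (a : {x // x ∈ Δ}) => bpVar a.1.1 x))
  (hBfun : ∀ a : PartIdx n, shCondEntropy ν (B a) Xstar = 0)

include hp hsum hν0 hν1 hcard hBent hBfun in
lemma exists_singleton_fiber [DecidableEq T] (hn : 2 ≤ n) (c : Fin n) :
    ∃ t ∈ rvSupport ν Xstar, ∀ u ∈ rvSupport ν Xstar,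
      (gB ν Xstar B hν0 hν1 (sIdx hn c) u = gB ν Xstar B hν0 hν1 (sIdx hn c) t ↔ u = t) := by
  classical
  have hνp : IsPMF ν := ⟨hν0, hν1⟩
  have hpp : IsPMF p := ⟨fun i => (hp i).le, hsum⟩
  set S := rvSupport ν Xstar with hSdef
  set gi : (i : Fin n) → T → γ (sIdx hn i) := fun i => gB ν Xstar B hν0 hν1 (sIdx hn i) with hgi
  have himg2i : ∀ i : Fin n, (S.image (gi i)).card = 2 := by
    intro i
    rw [← supp_eq_image ν Xstar (B (sIdx hn i)) (gi i)
      (fun ω hω => gB_spec ν Xstar B hν0 hν1 hBfun (sIdx hn i) hω)]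
    exact cardB2 p ν Xstar B hp hsum hν0 hν1 hcard hBent hBfun hn (sIdx hn i)
  have hSn : S.card = n := cardS_eq p ν Xstar B hp hsum hν0 hν1 hcard hBent hBfun hn
  obtain ⟨v1, v2, hv12, hvimg⟩ := Finset.card_eq_two.1 (himg2i c)
  set P := S.filter (fun u => gi c u = v1) with hP
  set Q := S.filter (fun u => gi c u = v2) with hQ
  have hmemval : ∀ u ∈ S, gi c u = v1 ∨ gi c u = v2 := by
    intro u hu
    have hm : gi c u ∈ S.image (gi c) := Finset.mem_image_of_mem (gi c) hu
    rw [hvimg] at hm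
    simpa using hm
  have hPQdisj : Disjoint P Q := by
    refine Finset.disjoint_left.2 fun u hu1 hu2 => ?_
    exact hv12 (((Finset.mem_filter.1 hu1).2).symm.trans ((Finset.mem_filter.1 hu2).2))
  have hPQ : P ∪ Q = S := by
    apply Finset.ext
    intro u
    simp only [Finset.mem_union, hP, hQ, Finset.mem_filter]
    constructor
    · rintro (⟨h, _⟩ | ⟨h, _⟩) <;> exact h
    · intro hu
      rcases hmemval u hu with h | h
      · exact Or.inl ⟨hu, h⟩
      · exact Or.inr ⟨hu, h⟩
  have hPne : P.Nonempty := by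
    have hm : v1 ∈ S.image (gi c) := by rw [hvimg]; exact Finset.mem_insert_self v1 {v2}
    obtain ⟨u, hu, hgu⟩ := Finset.mem_image.1 hm
    exact ⟨u, Finset.mem_filter.2 ⟨hu, hgu⟩⟩
  have hQne : Q.Nonempty := by
    have hm : v2 ∈ S.image (gi c) := by
      rw [hvimg]; exact Finset.mem_insert_of_mem (Finset.mem_singleton_self v2)
    obtain ⟨u, hu, hgu⟩ := Finset.mem_image.1 hm
    exact ⟨u, Finset.mem_filter.2 ⟨hu, hgu⟩⟩
  have hdone : ∀ (v : γ (sIdx hn c)), (S.filter (fun u => gi c u = v)).card = 1 →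
      ∃ t ∈ S, ∀ u ∈ S, (gi c u = gi c t ↔ u = t) := by
    intro v h1
    obtain ⟨t, ht⟩ := Finset.card_eq_one.1 h1
    have htR : t ∈ S.filter (fun u => gi c u = v) := ht ▸ Finset.mem_singleton_self t
    have htS : t ∈ S := (Finset.mem_filter.1 htR).1
    have hgt : gi c t = v := (Finset.mem_filter.1 htR).2
    refine ⟨t, htS, fun u hu => ⟨fun hgu => ?_, fun h => by rw [h]⟩⟩
    have humem : u ∈ S.filter (fun u => gi c u = v) :=
      Finset.mem_filter.2 ⟨hu, hgu.trans hgt⟩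
    rw [ht] at humem
    exact Finset.mem_singleton.1 humem
  by_cases hP1 : P.card = 1
  · exact hdone v1 hP1
  by_cases hQ1 : Q.card = 1
  · exact hdone v2 hQ1
  exfalso
  have hPc : 2 ≤ P.card := by
    have := Finset.card_pos.2 hPne
    omega
  have hQc : 2 ≤ Q.card := by
    have := Finset.card_pos.2 hQne
    omega
  have hcards : P.card + Q.card = n := by
    rw [← Finset.card_union_of_disjoint hPQdisj, hPQ, hSn]
  have hn3 : 3 ≤ n := by omega
  have hpair3 : ∀ i : Fin n, i ≠ c → (S.image (fun u => (gi i u, gi c u))).card = 3 := by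
    intro i hic
    have hsp : rvSupport ν (fun ω => (B (sIdx hn i) ω, B (sIdx hn c) ω)) =
        S.image (fun u => (gi i u, gi c u)) := by
      refine supp_eq_image ν Xstar _ _ fun ω hω => ?_
      have e1 := gB_spec ν Xstar B hν0 hν1 hBfun (sIdx hn i) hω
      have e2 := gB_spec ν Xstar B hν0 hν1 hBfun (sIdx hn c) hω
      simp only [Prod.mk.injEq]
      exact ⟨e1, e2⟩
    have hmut1 : FnDep ν (tupleB B {sIdx hn i, sIdx hn c})
        (fun ω => (B (sIdx hn i) ω, B (sIdx hn c) ω)) := by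
      intro ω ω' _ _ heq
      have e1 := congrFun heq ⟨sIdx hn i, Finset.mem_insert_self _ _⟩
      have e2 := congrFun heq ⟨sIdx hn c, Finset.mem_insert_of_mem (Finset.mem_singleton_self _)⟩
      simp only [Prod.mk.injEq]
      exact ⟨e1, e2⟩
    have hmut2 : FnDep ν (fun ω => (B (sIdx hn i) ω, B (sIdx hn c) ω))
        (tupleB B {sIdx hn i, sIdx hn c}) := by
      intro ω ω' _ _ heq
      funext x
      obtain ⟨xv, hx⟩ := x
      rcases Finset.mem_insert.1 hx with rfl | hx2
      · exact congrArg Prod.fst heq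
      · have hxc : xv = sIdx hn c := Finset.mem_singleton.1 hx2
        subst hxc
        exact congrArg Prod.snd heq
    have hcardeq := card_supp_eq_of_mutual hνp hmut1 hmut2
    have h3 := card_pair_three p ν Xstar B hp hsum hν0 hν1 hcard hBent hBfun hn hn3 hic
    have htB : ({i, c} : Finset (Fin n)).image (sIdx hn) = {sIdx hn i, sIdx hn c} := by
      rw [Finset.image_insert, Finset.image_singleton]
    rw [htB] at h3
    rw [← hsp, ← hcardeq]
    exact h3
  -- each i ≠ c has a fiber of `gi i` inside P or inside Q
  have hPorC : ∀ i ∈ Finset.univ.erase c,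
      (∃ w, (S.filter (fun u => gi i u = w)).Nonempty ∧ S.filter (fun u => gi i u = w) ⊆ P) ∨
      (∃ w, (S.filter (fun u => gi i u = w)).Nonempty ∧ S.filter (fun u => gi i u = w) ⊆ Q) := by
    intro i hi
    have hic : i ≠ c := (Finset.mem_erase.1 hi).1
    obtain ⟨w1, w2, hw12, hwimg⟩ := Finset.card_eq_two.1 (himg2i i)
    have hE3 : (S.image (fun u => (gi i u, gi c u))).card = 3 := hpair3 i hic
    have hEsub : S.image (fun u => (gi i u, gi c u)) ⊆
        ({w1, w2} : Finset (γ (sIdx hn i))) ×ˢ ({v1, v2} : Finset (γ (sIdx hn c))) := by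
      intro e he
      obtain ⟨u, hu, rfl⟩ := Finset.mem_image.1 he
      refine Finset.mem_product.2 ⟨?_, ?_⟩
      · have hm := Finset.mem_image_of_mem (gi i) hu
        rw [hwimg] at hm
        exact hm
      · have hm := Finset.mem_image_of_mem (gi c) hu
        rw [hvimg] at hm
        exact hm
    have hprodcard : ((({w1, w2} : Finset (γ (sIdx hn i))) ×ˢ
        ({v1, v2} : Finset (γ (sIdx hn c))))).card = 4 := by
      rw [Finset.card_product, Finset.card_insert_of_notMem (by simp [hw12]),
        Finset.card_insert_of_notMem (by simp [hv12]), Finset.card_singleton,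
        Finset.card_singleton]
    have hmiss : ∃ e ∈ (({w1, w2} : Finset (γ (sIdx hn i))) ×ˢ
        ({v1, v2} : Finset (γ (sIdx hn c)))), e ∉ S.image (fun u => (gi i u, gi c u)) := by
      by_contra hcm
      push_neg at hcm
      have hsub2 : (({w1, w2} : Finset (γ (sIdx hn i))) ×ˢ
          ({v1, v2} : Finset (γ (sIdx hn c)))) ⊆ S.image (fun u => (gi i u, gi c u)) := hcm
      have := Finset.card_le_card hsub2
      omega
    obtain ⟨⟨wa, vb⟩, hmem, hnotE⟩ := hmiss
    have hwa : wa ∈ ({w1, w2} : Finset (γ (sIdx hn i))) := (Finset.mem_product.1 hmem).1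
    have hvb : vb ∈ ({v1, v2} : Finset (γ (sIdx hn c))) := (Finset.mem_product.1 hmem).2
    have hfibne : (S.filter (fun u => gi i u = wa)).Nonempty := by
      have hm : wa ∈ S.image (gi i) := by rw [hwimg]; exact hwa
      obtain ⟨u, hu, hgu⟩ := Finset.mem_image.1 hm
      exact ⟨u, Finset.mem_filter.2 ⟨hu, hgu⟩⟩
    have hfibnotvb : ∀ u ∈ S.filter (fun u => gi i u = wa), gi c u ≠ vb := by
      intro u huf hgu
      obtain ⟨huS, hgiu⟩ := Finset.mem_filter.1 huf
      exact hnotE (Finset.mem_image.2 ⟨u, huS, by rw [hgiu, hgu]⟩)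
    rcases Finset.mem_insert.1 hvb with rfl | hvb2
    · right
      refine ⟨wa, hfibne, fun u huf => ?_⟩
      obtain ⟨huS, _⟩ := Finset.mem_filter.1 huf
      rcases hmemval u huS with h1 | h2
      · exact absurd h1 (hfibnotvb u huf)
      · exact Finset.mem_filter.2 ⟨huS, h2⟩
    · have hvbv : vb = v2 := Finset.mem_singleton.1 hvb2
      subst hvbv
      left
      refine ⟨wa, hfibne, fun u huf => ?_⟩
      obtain ⟨huS, _⟩ := Finset.mem_filter.1 huf
      rcases hmemval u huS with h1 | h2
      · exact Finset.mem_filter.2 ⟨huS, h1⟩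
      · exact absurd h2 (hfibnotvb u huf)
  -- the key counting bound
  have key : ∀ (I' : Finset (Fin n)) (R : Finset T) (vR : γ (sIdx hn c)),
      I' ⊆ Finset.univ.erase c → I'.card ≤ n - 2 → R ⊆ S →
      (∀ u ∈ S, u ∉ R → gi c u = vR) →
      (∀ i ∈ I', ∃ w, (S.filter (fun u => gi i u = w)).Nonempty ∧
        S.filter (fun u => gi i u = w) ⊆ R) →
      2 + I'.card ≤ R.card + 1 := by
    intro I' R vR hsubc hcardle hRS hgconst hfib
    have hstep : ∀ J ⊆ I', ∀ j ∈ I', j ∉ J →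
        ¬ DepOn ((({c} : Finset (Fin n)).image (sIdx hn)) ∪ J.image (sIdx hn)) (sIdx hn j) := by
      intro J hJ j hjI hjJ
      have hJlt : J.card < I'.card := Finset.card_lt_card ⟨hJ, fun hcc => hjJ (hcc hjI)⟩
      have hKlt : (insert j (insert c J)).card < n := by
        have h1 : (insert j (insert c J)).card ≤ J.card + 2 := by
          calc (insert j (insert c J)).card ≤ (insert c J).card + 1 :=
                Finset.card_insert_le _ _
            _ ≤ (J.card + 1) + 1 := by
                have := Finset.card_insert_le c J
                omega
        omega
      obtain ⟨x, hx⟩ := exists_not_mem_of_card_lt hKlt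
      have hxj : x ≠ j := fun hceq => hx (by
        rw [hceq]; exact Finset.mem_insert_self j _)
      have hxc : x ≠ c := fun hceq => hx (by
        rw [hceq]; exact Finset.mem_insert_of_mem (Finset.mem_insert_self c J))
      have hxJ : x ∉ J := fun hceq => hx
        (Finset.mem_insert_of_mem (Finset.mem_insert_of_mem hceq))
      have hjc : j ≠ c := (Finset.mem_erase.1 (hsubc hjI)).1
      refine not_depOn_of_witness x j ?_ ?_
      · intro b hb
        rcases Finset.mem_union.1 hb with hb1 | hb2
        · obtain ⟨i', hi', rfl⟩ := Finset.mem_image.1 hb1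
          have hi'c : i' = c := Finset.mem_singleton.1 hi'
          subst hi'c
          exact (sIdx_sep hn i' x j).2 (by simp [hxc, hjc])
        · obtain ⟨i', hi', rfl⟩ := Finset.mem_image.1 hb2
          have h1 : x ≠ i' := fun hceq => hxJ (hceq ▸ hi')
          have h2 : j ≠ i' := fun hceq => hjJ (hceq ▸ hi')
          exact (sIdx_sep hn i' x j).2 (by simp [h1, h2])
      · intro hceq
        exact hxj (by simpa using (sIdx_sep hn j x j).1 hceq)
    have hchain := chainGe p B hνp hpp hp hBent hn (({c} : Finset (Fin n)).image (sIdx hn))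
      I' hstep
    have hl : (rvSupport ν (tupleB B (({c} : Finset (Fin n)).image (sIdx hn)))).card = 2 := by
      rw [Finset.image_singleton, card_supp_single B hνp (sIdx hn c)]
      exact cardB2 p ν Xstar B hp hsum hν0 hν1 hcard hBent hBfun hn (sIdx hn c)
    set Δ' := (({c} : Finset (Fin n)).image (sIdx hn)) ∪ I'.image (sIdx hn) with hΔ'
    have hsuppΔ : rvSupport ν (tupleB B Δ') =
        S.image (fun t (x : {x // x ∈ Δ'}) => gB ν Xstar B hν0 hν1 x.1 t) := by
      refine supp_eq_image ν Xstar _ _ fun ω hω => ?_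
      funext x
      exact gB_spec ν Xstar B hν0 hν1 hBfun x.1 hω
    have hconstoff : ∀ u ∈ S, ∀ u' ∈ S, u ∉ R → u' ∉ R →
        (fun (x : {x // x ∈ Δ'}) => gB ν Xstar B hν0 hν1 x.1 u) =
        (fun (x : {x // x ∈ Δ'}) => gB ν Xstar B hν0 hν1 x.1 u') := by
      intro u hu u' hu' hnR hn'R
      funext x
      obtain ⟨xv, hx⟩ := x
      rcases Finset.mem_union.1 hx with h1 | h2
      · obtain ⟨i'', hi'', rfl⟩ := Finset.mem_image.1 h1
        have hi''c : i'' = c := Finset.mem_singleton.1 hi''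
        subst hi''c
        show gi i'' u = gi i'' u'
        rw [hgconst u hu hnR, hgconst u' hu' hn'R]
      · obtain ⟨i'', hi'', rfl⟩ := Finset.mem_image.1 h2
        obtain ⟨w, hwne, hwsub⟩ := hfib i'' hi''
        have hw_in : w ∈ S.image (gi i'') := by
          obtain ⟨z, hz⟩ := hwne
          exact Finset.mem_image.2 ⟨z, (Finset.mem_filter.1 hz).1, (Finset.mem_filter.1 hz).2⟩
        have hune : gi i'' u ≠ w := fun hcc => hnR (hwsub (Finset.mem_filter.2 ⟨hu, hcc⟩))
        have hu'ne : gi i'' u' ≠ w := fun hcc => hn'R (hwsub (Finset.mem_filter.2 ⟨hu', hcc⟩))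
        show gi i'' u = gi i'' u'
        exact eq_of_two_values (himg2i i'') (Finset.mem_image_of_mem _ hu)
          (Finset.mem_image_of_mem _ hu') hw_in hune hu'ne
    have himgbound : (S.image (fun t (x : {x // x ∈ Δ'}) =>
        gB ν Xstar B hν0 hν1 x.1 t)).card ≤ R.card + 1 := by
      have hSsplit : R ∪ (S \ R) = S := Finset.union_sdiff_of_subset hRS
      rw [← hSsplit, Finset.image_union]
      refine le_trans (Finset.card_union_le _ _) ?_
      have hb1 : ((R.image (fun t (x : {x // x ∈ Δ'}) => gB ν Xstar B hν0 hν1 x.1 t))).card ≤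
          R.card := Finset.card_image_le
      have hb2 : (((S \ R).image (fun t (x : {x // x ∈ Δ'}) =>
          gB ν Xstar B hν0 hν1 x.1 t))).card ≤ 1 := by
        refine Finset.card_le_one.2 fun e1 he1 e2 he2 => ?_
        obtain ⟨u, hu, rfl⟩ := Finset.mem_image.1 he1
        obtain ⟨u', hu', rfl⟩ := Finset.mem_image.1 he2
        have hm1 := Finset.mem_sdiff.1 hu
        have hm2 := Finset.mem_sdiff.1 hu'
        exact hconstoff u hm1.1 u' hm2.1 hm1.2 hm2.2
      omega
    rw [hsuppΔ] at hchain
    omega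
  -- partition indices into Ip and Ic
  set Ip := (Finset.univ.erase c).filter (fun i =>
    ∃ w, (S.filter (fun u => gi i u = w)).Nonempty ∧
      S.filter (fun u => gi i u = w) ⊆ P) with hIp
  set Ic := (Finset.univ.erase c).filter (fun i =>
    ¬ ∃ w, (S.filter (fun u => gi i u = w)).Nonempty ∧
      S.filter (fun u => gi i u = w) ⊆ P) with hIc
  have hIcfib : ∀ i ∈ Ic, ∃ w, (S.filter (fun u => gi i u = w)).Nonempty ∧
      S.filter (fun u => gi i u = w) ⊆ Q := by
    intro i hi
    have hm := Finset.mem_filter.1 hi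
    exact (hPorC i hm.1).resolve_left hm.2
  have hIpfib : ∀ i ∈ Ip, ∃ w, (S.filter (fun u => gi i u = w)).Nonempty ∧
      S.filter (fun u => gi i u = w) ⊆ P := fun i hi => (Finset.mem_filter.1 hi).2
  have hIsum : Ip.card + Ic.card = n - 1 := by
    rw [hIp, hIc, Finset.card_filter_add_card_filter_not,
      Finset.card_erase_of_mem (Finset.mem_univ c), Finset.card_univ, Fintype.card_fin]
  have hgoffP : ∀ u ∈ S, u ∉ P → gi c u = v2 := by
    intro u hu hnP
    rcases hmemval u hu with h1 | h2
    · exact absurd (Finset.mem_filter.2 ⟨hu, h1⟩) hnP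
    · exact h2
  have hgoffQ : ∀ u ∈ S, u ∉ Q → gi c u = v1 := by
    intro u hu hnQ
    rcases hmemval u hu with h1 | h2
    · exact h1
    · exact absurd (Finset.mem_filter.2 ⟨hu, h2⟩) hnQ
  have hPle : P.card ≤ n - 2 := by omega
  have hQle : Q.card ≤ n - 2 := by omega
  have hgenbound : ∀ (IR : Finset (Fin n)) (R : Finset T) (vR : γ (sIdx hn c)),
      IR ⊆ Finset.univ.erase c → R ⊆ S → R.card ≤ n - 2 →
      (∀ u ∈ S, u ∉ R → gi c u = vR) →
      (∀ i ∈ IR, ∃ w, (S.filter (fun u => gi i u = w)).Nonempty ∧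
        S.filter (fun u => gi i u = w) ⊆ R) →
      IR.card ≤ R.card - 1 := by
    intro IR R vR hsubc hRS hRle hgconst hfib
    by_cases hc1 : IR.card ≤ n - 2
    · have := key IR R vR hsubc hc1 hRS hgconst hfib
      omega
    · exfalso
      have hIRle : IR.card ≤ n - 1 := by
        calc IR.card ≤ (Finset.univ.erase c).card := Finset.card_le_card hsubc
          _ = n - 1 := by
            rw [Finset.card_erase_of_mem (Finset.mem_univ c), Finset.card_univ,
              Fintype.card_fin]
      obtain ⟨I'', hI''sub, hI''card⟩ := Finset.exists_subset_card_eq (show n - 2 ≤ IR.card by omega)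
      have := key I'' R vR (hI''sub.trans hsubc) (le_of_eq hI''card) hRS hgconst
        (fun i hi => hfib i (hI''sub hi))
      omega
  have hIpbound : Ip.card ≤ P.card - 1 :=
    hgenbound Ip P v2 (Finset.filter_subset _ _) (Finset.filter_subset _ _) hPle hgoffP hIpfib
  have hIcbound : Ic.card ≤ Q.card - 1 :=
    hgenbound Ic Q v1 (Finset.filter_subset _ _) (Finset.filter_subset _ _) hQle hgoffQ hIcfib
  omega

include hp hsum hν0 hν1 hcard hBent hBfun in
lemma indicator_part (hn : 2 ≤ n) :
    ∀ (i : Fin n) (a : PartIdx n), (a.1 = {i} ∨ a.1 = ({i} : Finset (Fin n))ᶜ) →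
      ∃ (t : T) (v : γ a), ∀ ω, 0 < ν ω → (B a ω = v ↔ Xstar ω = t) := by
  classical
  intro i a ha
  have haeq : a = sIdx hn i := by
    apply Subtype.ext
    rcases ha with h1 | h2
    · have hi0 : i ≠ 0 := by
        intro hceq
        subst hceq
        exact a.2.2 (h1 ▸ Finset.mem_singleton_self 0)
      rw [h1, sIdx, dif_neg hi0]
    · have hi0 : i = 0 := by
        by_contra hceq
        have h0mem : (0 : Fin n) ∈ ({i} : Finset (Fin n))ᶜ :=
          Finset.mem_compl.2 (by
            simp only [Finset.mem_singleton]
            exact fun hcc : (0 : Fin n) = i => hceq hcc.symm)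
        exact a.2.2 (h2 ▸ h0mem)
      subst hi0
      rw [h2, sIdx, dif_pos rfl]
  subst haeq
  obtain ⟨t0, ht0S, hfib⟩ :=
    exists_singleton_fiber p ν Xstar B hp hsum hν0 hν1 hcard hBent hBfun hn i
  refine ⟨t0, gB ν Xstar B hν0 hν1 (sIdx hn i) t0, fun ω hω => ?_⟩
  rw [← gB_spec ν Xstar B hν0 hν1 hBfun (sIdx hn i) hω]
  exact hfib (Xstar ω) (mem_rvSupport hω)

end MainC

section MainD

variable {n : ℕ} [NeZero n] {Ω' T : Type*} [Fintype Ω']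
  (p : Fin n → ℝ) (ν : Ω' → ℝ) (Xstar : Ω' → T)
  {γ : PartIdx n → Type*} (B : (a : PartIdx n) → Ω' → γ a)
  (hp : ∀ i, 0 < p i) (hsum : ∑ i, p i = 1)
  (hν0 : ∀ ω, 0 ≤ ν ω) (hν1 : ∑ ω, ν ω = 1)
  (hcard : (rvSupport ν Xstar).card ≤ n)
  (hBent : ∀ Δ : Finset (PartIdx n),
      shEntropy ν (fun ω (a : {x // x ∈ Δ}) => B a.1 ω) =
        shEntropy p (fun x (a : {x // x ∈ Δ}) => bpVar a.1.1 x))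
  (hBfun : ∀ a : PartIdx n, shCondEntropy ν (B a) Xstar = 0)

include hp hsum hν0 hν1 hcard hBent hBfun in
lemma completeness_part [DecidableEq T] (hn : 2 ≤ n) :
    ∀ Bstar : Ω' → Bool, shCondEntropy ν Bstar Xstar = 0 → 0 < shEntropy ν Bstar →
      ∃ a : PartIdx n, shCondEntropy ν Bstar (B a) = 0 ∧ shCondEntropy ν (B a) Bstar = 0 := by
  classical
  intro Bstar hBsf hBsp
  have hνp : IsPMF ν := ⟨hν0, hν1⟩
  have hpp : IsPMF p := ⟨fun i => (hp i).le, hsum⟩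
  have hFDs : FnDep ν Xstar Bstar := (fnDep_iff hνp Bstar Xstar).2 hBsf
  have hSn : (rvSupport ν Xstar).card = n :=
    cardS_eq p ν Xstar B hp hsum hν0 hν1 hcard hBent hBfun hn
  obtain ⟨ω1, ω2, hv1, hv2, hneB⟩ := exists_ne_of_shEntropy_pos hνp hBsp
  by_cases hn2 : n = 2
  · -- two-point case: everything is mutually determining
    set a := sIdx hn ⟨1, by omega⟩ with ha
    have h2le : 2 ≤ (rvSupport ν Bstar).card :=
      Finset.one_lt_card.2 ⟨Bstar ω1, mem_rvSupport hv1, Bstar ω2, mem_rvSupport hv2, hneB⟩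
    have hle : (rvSupport ν Bstar).card ≤ (rvSupport ν Xstar).card :=
      card_le_of_fnDep hνp hFDs
    have hsym : FnDep ν Bstar Xstar := fnDep_symm_of_card_le hνp hFDs (by omega)
    have hBaX : FnDep ν Xstar (B a) := (fnDep_iff hνp (B a) Xstar).2 (hBfun a)
    have hBa2 : (rvSupport ν (B a)).card = 2 :=
      cardB2 p ν Xstar B hp hsum hν0 hν1 hcard hBent hBfun hn a
    have hsymB : FnDep ν (B a) Xstar := fnDep_symm_of_card_le hνp hBaX (by omega)
    exact ⟨a, shCondEntropy_eq_zero_of_fnDep hνp (fnDep_trans hsymB hFDs),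
      shCondEntropy_eq_zero_of_fnDep hνp (fnDep_trans hsym hBaX)⟩
  · have hn3 : 3 ≤ n := by omega
    have hsing := fun c => exists_singleton_fiber p ν Xstar B hp hsum hν0 hν1 hcard
      hBent hBfun hn c
    choose tf htS htfib using hsing
    have himg2i : ∀ i : Fin n,
        ((rvSupport ν Xstar).image (gB ν Xstar B hν0 hν1 (sIdx hn i))).card = 2 := by
      intro i
      rw [← supp_eq_image ν Xstar (B (sIdx hn i)) (gB ν Xstar B hν0 hν1 (sIdx hn i))
        (fun ω hω => gB_spec ν Xstar B hν0 hν1 hBfun (sIdx hn i) hω)]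
      exact cardB2 p ν Xstar B hp hsum hν0 hν1 hcard hBent hBfun hn (sIdx hn i)
    have hoff : ∀ c : Fin n, ∀ u ∈ rvSupport ν Xstar, ∀ u' ∈ rvSupport ν Xstar,
        u ≠ tf c → u' ≠ tf c →
        gB ν Xstar B hν0 hν1 (sIdx hn c) u = gB ν Xstar B hν0 hν1 (sIdx hn c) u' := by
      intro c u hu u' hu' h1 h2
      have e1 : gB ν Xstar B hν0 hν1 (sIdx hn c) u ≠
          gB ν Xstar B hν0 hν1 (sIdx hn c) (tf c) := fun hcc => h1 ((htfib c u hu).1 hcc)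
      have e2 : gB ν Xstar B hν0 hν1 (sIdx hn c) u' ≠
          gB ν Xstar B hν0 hν1 (sIdx hn c) (tf c) := fun hcc => h2 ((htfib c u' hu').1 hcc)
      exact eq_of_two_values (himg2i c) (Finset.mem_image_of_mem _ hu)
        (Finset.mem_image_of_mem _ hu') (Finset.mem_image_of_mem _ (htS c)) e1 e2
    have hpair3 : ∀ c d : Fin n, c ≠ d →
        ((rvSupport ν Xstar).image (fun u => (gB ν Xstar B hν0 hν1 (sIdx hn c) u,
          gB ν Xstar B hν0 hν1 (sIdx hn d) u))).card = 3 := by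
      intro c d hcd
      have hsp : rvSupport ν (fun ω => (B (sIdx hn c) ω, B (sIdx hn d) ω)) =
          (rvSupport ν Xstar).image (fun u => (gB ν Xstar B hν0 hν1 (sIdx hn c) u,
            gB ν Xstar B hν0 hν1 (sIdx hn d) u)) := by
        refine supp_eq_image ν Xstar _ _ fun ω hω => ?_
        simp only [Prod.mk.injEq]
        exact ⟨gB_spec ν Xstar B hν0 hν1 hBfun (sIdx hn c) hω,
          gB_spec ν Xstar B hν0 hν1 hBfun (sIdx hn d) hω⟩
      have hmut1 : FnDep ν (tupleB B {sIdx hn c, sIdx hn d})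
          (fun ω => (B (sIdx hn c) ω, B (sIdx hn d) ω)) := by
        intro ω ω' _ _ heq
        have e1 := congrFun heq ⟨sIdx hn c, Finset.mem_insert_self _ _⟩
        have e2 := congrFun heq
          ⟨sIdx hn d, Finset.mem_insert_of_mem (Finset.mem_singleton_self _)⟩
        simp only [Prod.mk.injEq]
        exact ⟨e1, e2⟩
      have hmut2 : FnDep ν (fun ω => (B (sIdx hn c) ω, B (sIdx hn d) ω))
          (tupleB B {sIdx hn c, sIdx hn d}) := by
        intro ω ω' _ _ heq
        funext x
        obtain ⟨xv, hx⟩ := x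
        rcases Finset.mem_insert.1 hx with rfl | hx2
        · exact congrArg Prod.fst heq
        · have hxc : xv = sIdx hn d := Finset.mem_singleton.1 hx2
          subst hxc
          exact congrArg Prod.snd heq
      have hcardeq := card_supp_eq_of_mutual hνp hmut1 hmut2
      have h3 := card_pair_three p ν Xstar B hp hsum hν0 hν1 hcard hBent hBfun hn hn3 hcd
      have htB : ({c, d} : Finset (Fin n)).image (sIdx hn) = {sIdx hn c, sIdx hn d} := by
        rw [Finset.image_insert, Finset.image_singleton]
      rw [htB] at h3
      rw [← hsp, ← hcardeq]
      exact h3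
    have htinj : Function.Injective tf := by
      intro c d hcd
      by_contra hne'
      have h3 := hpair3 c d hne'
      have hS2 : (rvSupport ν Xstar).Nonempty := by
        rw [← Finset.card_pos, hSn]; omega
      have herase : ((rvSupport ν Xstar).erase (tf c)).Nonempty := by
        rw [← Finset.card_pos, Finset.card_erase_of_mem (htS c), hSn]; omega
      obtain ⟨u0, hu0⟩ := herase
      have hu0S : u0 ∈ rvSupport ν Xstar := Finset.mem_of_mem_erase hu0
      have hu0ne : u0 ≠ tf c := (Finset.mem_erase.1 hu0).1
      have hsub : (rvSupport ν Xstar).image (fun u => (gB ν Xstar B hν0 hν1 (sIdx hn c) u,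
          gB ν Xstar B hν0 hν1 (sIdx hn d) u)) ⊆
          {(gB ν Xstar B hν0 hν1 (sIdx hn c) (tf c), gB ν Xstar B hν0 hν1 (sIdx hn d) (tf c)),
           (gB ν Xstar B hν0 hν1 (sIdx hn c) u0, gB ν Xstar B hν0 hν1 (sIdx hn d) u0)} := by
        intro e he
        obtain ⟨u, hu, rfl⟩ := Finset.mem_image.1 he
        by_cases hut : u = tf c
        · subst hut
          exact Finset.mem_insert_self _ _
        · have hutd : u ≠ tf d := by rw [← hcd]; exact hut
          have hu0d : u0 ≠ tf d := by rw [← hcd]; exact hu0ne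
          have ec : gB ν Xstar B hν0 hν1 (sIdx hn c) u =
              gB ν Xstar B hν0 hν1 (sIdx hn c) u0 := hoff c u hu u0 hu0S hut hu0ne
          have ed : gB ν Xstar B hν0 hν1 (sIdx hn d) u =
              gB ν Xstar B hν0 hν1 (sIdx hn d) u0 := hoff d u hu u0 hu0S hutd hu0d
          rw [ec, ed]
          exact Finset.mem_insert_of_mem (Finset.mem_singleton_self _)
      have hcle := Finset.card_le_card hsub
      have : ({(gB ν Xstar B hν0 hν1 (sIdx hn c) (tf c),
          gB ν Xstar B hν0 hν1 (sIdx hn d) (tf c)),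
          (gB ν Xstar B hν0 hν1 (sIdx hn c) u0,
          gB ν Xstar B hν0 hν1 (sIdx hn d) u0)} : Finset _).card ≤ 2 := by
        refine le_trans (Finset.card_insert_le _ _) ?_
        rw [Finset.card_singleton]
      omega
    have hSim : Finset.univ.image tf = rvSupport ν Xstar := by
      apply Finset.eq_of_subset_of_card_le
      · intro u hu
        obtain ⟨c, _, rfl⟩ := Finset.mem_image.1 hu
        exact htS c
      · rw [Finset.card_image_of_injective _ htinj, Finset.card_univ, Fintype.card_fin, hSn]
    have hrep : ∀ ω, 0 < ν ω → ∃ z, tf z = Xstar ω := by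
      intro ω hω
      have hm := mem_rvSupport (μ := ν) (X := Xstar) hω
      rw [← hSim] at hm
      obtain ⟨z, _, hz⟩ := Finset.mem_image.1 hm
      exact ⟨z, hz⟩
    -- same-side values coincide
    have hgt : ∀ (a : PartIdx n) (x y : Fin n), (x ∈ a.1 ↔ y ∈ a.1) →
        gB ν Xstar B hν0 hν1 a (tf x) = gB ν Xstar B hν0 hν1 a (tf y) := by
      intro a x y hside
      obtain ⟨ωx, hωx, hXx⟩ := rvSupport_eq (htS x)
      obtain ⟨ωy, hωy, hXy⟩ := rvSupport_eq (htS y)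
      have main : ∀ Δidx : Finset (Fin n), DepOn (Δidx.image (sIdx hn)) a →
          (∀ i'' ∈ Δidx, x ≠ i'') → (∀ i'' ∈ Δidx, y ≠ i'') →
          gB ν Xstar B hν0 hν1 a (tf x) = gB ν Xstar B hν0 hν1 a (tf y) := by
        intro Δidx hdep hxd hyd
        have hFD : FnDep ν (tupleB B (Δidx.image (sIdx hn))) (B a) :=
          (depOn_iff_fnDep p B hνp hpp hp hBent _ a).2 hdep
        have htup : tupleB B (Δidx.image (sIdx hn)) ωx = tupleB B (Δidx.image (sIdx hn)) ωy := by
          funext b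
          obtain ⟨bv, hbv⟩ := b
          obtain ⟨i'', hi'', rfl⟩ := Finset.mem_image.1 hbv
          show B (sIdx hn i'') ωx = B (sIdx hn i'') ωy
          have e1 : B (sIdx hn i'') ωx = gB ν Xstar B hν0 hν1 (sIdx hn i'') (tf x) := by
            rw [← hXx]
            exact (gB_spec ν Xstar B hν0 hν1 hBfun (sIdx hn i'') hωx).symm
          have e2 : B (sIdx hn i'') ωy = gB ν Xstar B hν0 hν1 (sIdx hn i'') (tf y) := by
            rw [← hXy]
            exact (gB_spec ν Xstar B hν0 hν1 hBfun (sIdx hn i'') hωy).symm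
          rw [e1, e2]
          exact hoff i'' (tf x) (htS x) (tf y) (htS y)
            (fun hcc => hxd i'' hi'' (htinj hcc))
            (fun hcc => hyd i'' hi'' (htinj hcc))
        have hBeq : B a ωx = B a ωy := hFD ωx ωy hωx hωy htup
        calc gB ν Xstar B hν0 hν1 a (tf x) = gB ν Xstar B hν0 hν1 a (Xstar ωx) := by rw [hXx]
          _ = B a ωx := gB_spec ν Xstar B hν0 hν1 hBfun a hωx
          _ = B a ωy := hBeq
          _ = gB ν Xstar B hν0 hν1 a (Xstar ωy) :=
              (gB_spec ν Xstar B hν0 hν1 hBfun a hωy).symm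
          _ = gB ν Xstar B hν0 hν1 a (tf y) := by rw [hXy]
      by_cases hx : x ∈ a.1
      · have hy := hside.1 hx
        refine main (a.1)ᶜ ?_ ?_ ?_
        · intro z z' hagree
          rw [bpVar_eq_iff]
          by_cases hz : z ∈ a.1 <;> by_cases hz' : z' ∈ a.1
          · simp [hz, hz']
          · have hag := hagree (sIdx hn z')
              (Finset.mem_image_of_mem _ (Finset.mem_compl.2 hz'))
            have hzz' : z = z' := by simpa using (sIdx_sep hn z' z z').1 hag
            exact absurd (show z' ∈ a.1 by rw [← hzz']; exact hz) hz'
          · have hag := hagree (sIdx hn z)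
              (Finset.mem_image_of_mem _ (Finset.mem_compl.2 hz))
            have hzz' : z' = z := by simpa using (sIdx_sep hn z z z').1 hag
            exact absurd (show z ∈ a.1 by rw [← hzz']; exact hz') hz
          · simp [hz, hz']
        · intro i'' hi'' hcc
          exact (Finset.mem_compl.1 hi'') (hcc ▸ hx)
        · intro i'' hi'' hcc
          exact (Finset.mem_compl.1 hi'') (hcc ▸ hy)
      · have hy : y ∉ a.1 := fun hcc => hx (hside.2 hcc)
        refine main a.1 ?_ ?_ ?_
        · intro z z' hagree
          rw [bpVar_eq_iff]
          by_cases hz : z ∈ a.1 <;> by_cases hz' : z' ∈ a.1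
          · simp [hz, hz']
          · have hag := hagree (sIdx hn z) (Finset.mem_image_of_mem _ hz)
            have hzz' : z' = z := by simpa using (sIdx_sep hn z z z').1 hag
            exact absurd (show z' ∈ a.1 by rw [hzz']; exact hz) hz'
          · have hag := hagree (sIdx hn z') (Finset.mem_image_of_mem _ hz')
            have hzz' : z = z' := by simpa using (sIdx_sep hn z' z z').1 hag
            exact absurd (show z ∈ a.1 by rw [hzz']; exact hz') hz
          · simp [hz, hz']
        · intro i'' hi'' hcc
          exact hx (hcc ▸ hi'')
        · intro i'' hi'' hcc
          exact hy (hcc ▸ hi'')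
    have hcross : ∀ (a : PartIdx n) (x y : Fin n), x ∈ a.1 → y ∉ a.1 →
        gB ν Xstar B hν0 hν1 a (tf x) ≠ gB ν Xstar B hν0 hν1 a (tf y) := by
      intro a x y hx hy hcc
      obtain ⟨ω, ω', hω, hω', hne⟩ := nonconstB p ν B hp hsum hν0 hν1 hBent a
      apply hne
      obtain ⟨z, hz⟩ := hrep ω hω
      obtain ⟨z', hz'⟩ := hrep ω' hω'
      have hall : ∀ w : Fin n, gB ν Xstar B hν0 hν1 a (tf w) =
          gB ν Xstar B hν0 hν1 a (tf x) := by
        intro w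
        by_cases hw : w ∈ a.1
        · exact hgt a w x (by simp [hw, hx])
        · calc gB ν Xstar B hν0 hν1 a (tf w) = gB ν Xstar B hν0 hν1 a (tf y) :=
              hgt a w y (by simp [hw, hy])
            _ = gB ν Xstar B hν0 hν1 a (tf x) := hcc.symm
      calc B a ω = gB ν Xstar B hν0 hν1 a (Xstar ω) :=
            (gB_spec ν Xstar B hν0 hν1 hBfun a hω).symm
        _ = gB ν Xstar B hν0 hν1 a (tf z) := by rw [hz]
        _ = gB ν Xstar B hν0 hν1 a (tf x) := hall z
        _ = gB ν Xstar B hν0 hν1 a (tf z') := (hall z').symm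
        _ = gB ν Xstar B hν0 hν1 a (Xstar ω') := by rw [hz']
        _ = B a ω' := gB_spec ν Xstar B hν0 hν1 hBfun a hω'
    -- the Boolean function through Xstar
    have hgs_spec : ∀ ω, 0 < ν ω →
        depMap hνp Xstar Bstar (Xstar ω) = Bstar ω := fun ω hω => depMap_spec hνp hFDs hω
    obtain ⟨x1, hx1⟩ := hrep ω1 hv1
    obtain ⟨x2, hx2⟩ := hrep ω2 hv2
    have hsne : depMap hνp Xstar Bstar (tf x1) ≠ depMap hνp Xstar Bstar (tf x2) := by
      rw [hx1, hx2, hgs_spec ω1 hv1, hgs_spec ω2 hv2]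
      exact hneB
    set β := Finset.univ.filter (fun i : Fin n =>
      depMap hνp Xstar Bstar (tf i) ≠ depMap hνp Xstar Bstar (tf 0)) with hβ
    have h0β : (0 : Fin n) ∉ β := by simp [hβ]
    have hβne : β.Nonempty := by
      by_cases h1 : depMap hνp Xstar Bstar (tf x1) = depMap hνp Xstar Bstar (tf 0)
      · exact ⟨x2, Finset.mem_filter.2 ⟨Finset.mem_univ _,
          fun hcc => hsne (h1.trans hcc.symm)⟩⟩
      · exact ⟨x1, Finset.mem_filter.2 ⟨Finset.mem_univ _, h1⟩⟩
    have hboolkey : ∀ b1 b2 b0 : Bool, (b1 = b2) ↔ ((b1 ≠ b0) ↔ (b2 ≠ b0)) := by decide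
    have hmemβ : ∀ i : Fin n, i ∈ β ↔
        depMap hνp Xstar Bstar (tf i) ≠ depMap hνp Xstar Bstar (tf 0) := fun i => by
      simp [hβ]
    have hsides : ∀ x y : Fin n, depMap hνp Xstar Bstar (tf x) = depMap hνp Xstar Bstar (tf y)
        ↔ (x ∈ β ↔ y ∈ β) := by
      intro x y
      rw [hmemβ, hmemβ]
      exact hboolkey _ _ _
    refine ⟨⟨β, hβne, h0β⟩, ?_, ?_⟩
    · -- H(Bstar | B a) = 0, i.e. FnDep (B a) Bstar
      refine shCondEntropy_eq_zero_of_fnDep hνp ?_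
      intro ω ω' hω hω' heq
      obtain ⟨z, hz⟩ := hrep ω hω
      obtain ⟨z', hz'⟩ := hrep ω' hω'
      have e : gB ν Xstar B hν0 hν1 ⟨β, hβne, h0β⟩ (tf z) =
          gB ν Xstar B hν0 hν1 ⟨β, hβne, h0β⟩ (tf z') := by
        calc gB ν Xstar B hν0 hν1 ⟨β, hβne, h0β⟩ (tf z)
            = gB ν Xstar B hν0 hν1 ⟨β, hβne, h0β⟩ (Xstar ω) := by rw [hz]
          _ = B ⟨β, hβne, h0β⟩ ω := gB_spec ν Xstar B hν0 hν1 hBfun _ hω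
          _ = B ⟨β, hβne, h0β⟩ ω' := heq
          _ = gB ν Xstar B hν0 hν1 ⟨β, hβne, h0β⟩ (Xstar ω') :=
              (gB_spec ν Xstar B hν0 hν1 hBfun _ hω').symm
          _ = gB ν Xstar B hν0 hν1 ⟨β, hβne, h0β⟩ (tf z') := by rw [hz']
      have hzz : (z ∈ β ↔ z' ∈ β) := by
        by_cases hzβ : z ∈ β <;> by_cases hz'β : z' ∈ β
        · simp [hzβ, hz'β]
        · exact absurd e (hcross ⟨β, hβne, h0β⟩ z z' hzβ hz'β)
        · exact absurd e.symm (hcross ⟨β, hβne, h0β⟩ z' z hz'β hzβ)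
        · simp [hzβ, hz'β]
      have e2 : depMap hνp Xstar Bstar (tf z) = depMap hνp Xstar Bstar (tf z') :=
        (hsides z z').2 hzz
      calc Bstar ω = depMap hνp Xstar Bstar (Xstar ω) := (hgs_spec ω hω).symm
        _ = depMap hνp Xstar Bstar (tf z) := by rw [hz]
        _ = depMap hνp Xstar Bstar (tf z') := e2
        _ = depMap hνp Xstar Bstar (Xstar ω') := by rw [hz']
        _ = Bstar ω' := hgs_spec ω' hω'
    · -- H(B a | Bstar) = 0, i.e. FnDep Bstar (B a)
      refine shCondEntropy_eq_zero_of_fnDep hνp ?_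
      intro ω ω' hω hω' heq
      obtain ⟨z, hz⟩ := hrep ω hω
      obtain ⟨z', hz'⟩ := hrep ω' hω'
      have e2 : depMap hνp Xstar Bstar (tf z) = depMap hνp Xstar Bstar (tf z') := by
        calc depMap hνp Xstar Bstar (tf z) = depMap hνp Xstar Bstar (Xstar ω) := by rw [hz]
          _ = Bstar ω := hgs_spec ω hω
          _ = Bstar ω' := heq
          _ = depMap hνp Xstar Bstar (Xstar ω') := (hgs_spec ω' hω').symm
          _ = depMap hνp Xstar Bstar (tf z') := by rw [hz']
      have hzz : (z ∈ β ↔ z' ∈ β) := (hsides z z').1 e2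
      have e : gB ν Xstar B hν0 hν1 ⟨β, hβne, h0β⟩ (tf z) =
          gB ν Xstar B hν0 hν1 ⟨β, hβne, h0β⟩ (tf z') := hgt ⟨β, hβne, h0β⟩ z z' hzz
      calc B ⟨β, hβne, h0β⟩ ω = gB ν Xstar B hν0 hν1 ⟨β, hβne, h0β⟩ (Xstar ω) :=
            (gB_spec ν Xstar B hν0 hν1 hBfun _ hω).symm
        _ = gB ν Xstar B hν0 hν1 ⟨β, hβne, h0β⟩ (tf z) := by rw [hz]
        _ = gB ν Xstar B hν0 hν1 ⟨β, hβne, h0β⟩ (tf z') := e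
        _ = gB ν Xstar B hν0 hν1 ⟨β, hβne, h0β⟩ (Xstar ω') := by rw [hz']
        _ = B ⟨β, hβne, h0β⟩ ω' := gB_spec ν Xstar B hν0 hν1 hBfun _ hω'

end MainD


/-- Theorem 3, structural properties: in the setting of the
random scalar characterisation theorem, the variables `B_⟨α⟩` are pairwise
distinct with nonzero entropy, the support of `X*` has size exactly `n`, each
`B_⟨α⟩` is a binary partition random variable of `X*` (it takes exactly two
values and is a function of `X*`), every binary function of `X*` with positive
entropy coincides with some `B_⟨α⟩`, and each `B_⟨{i}⟩` is an indicator random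
variable of `X*`. -/
theorem scalar_characterisation_structure {n : ℕ} [NeZero n]
    (p : Fin n → ℝ) (hp : ∀ i, 0 < p i) (hsum : ∑ i, p i = 1)
    (hmono : ∀ i j : Fin n, i ≤ j → p j ≤ p i)
    {Ω' T : Type*} [Fintype Ω'] (ν : Ω' → ℝ)
    (hν0 : ∀ ω, 0 ≤ ν ω) (hν1 : ∑ ω, ν ω = 1)
    (Xstar : Ω' → T) (hcard : (rvSupport ν Xstar).card ≤ n)
    {γ : PartIdx n → Type*} (B : (a : PartIdx n) → Ω' → γ a)
    (hBent : ∀ Δ : Finset (PartIdx n),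
      shEntropy ν (fun ω (a : {x // x ∈ Δ}) => B a.1 ω) =
        shEntropy p (fun x (a : {x // x ∈ Δ}) => bpVar a.1.1 x))
    (hBfun : ∀ a : PartIdx n, shCondEntropy ν (B a) Xstar = 0) :
    -- (1) distinctness and nonzero entropy
    (∀ a b : PartIdx n, a ≠ b →
      0 < shCondEntropy ν (B a) (B b) ∧ 0 < shCondEntropy ν (B b) (B a)) ∧
    (∀ a : PartIdx n, 0 < shEntropy ν (B a)) ∧
    -- (2) the support of `X*` has size exactly `n`
    (rvSupport ν Xstar).card = n ∧
    -- (3) each `B_⟨α⟩` takes exactly two values, i.e. is a binary partition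
    -- random variable of `X*`
    (∀ a : PartIdx n, (rvSupport ν (B a)).card = 2) ∧
    -- (4) completeness
    (∀ Bstar : Ω' → Bool, shCondEntropy ν Bstar Xstar = 0 → 0 < shEntropy ν Bstar →
      ∃ a : PartIdx n,
        shCondEntropy ν Bstar (B a) = 0 ∧ shCondEntropy ν (B a) Bstar = 0) ∧
    -- (5) each `B_⟨{i}⟩` is an indicator random variable of `X*`: it takes a
    -- particular value exactly when `X*` equals a particular element
    (∀ (i : Fin n) (a : PartIdx n), (a.1 = {i} ∨ a.1 = ({i} : Finset (Fin n))ᶜ) →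
      ∃ (t : T) (v : γ a), ∀ ω, 0 < ν ω → (B a ω = v ↔ Xstar ω = t)) := by
  classical
  have hνp : IsPMF ν := ⟨hν0, hν1⟩
  by_cases hn1 : n = 1
  · subst hn1
    have hempty : IsEmpty (PartIdx 1) := by
      constructor
      intro a
      obtain ⟨x, hx⟩ := a.2.1
      have hx0 : x = 0 := Subsingleton.elim x 0
      exact a.2.2 (hx0 ▸ hx)
    refine ⟨fun a => hempty.elim a, fun a => hempty.elim a, ?_, fun a => hempty.elim a,
      ?_, fun i a => hempty.elim a⟩
    · obtain ⟨ω0, hω0⟩ := exists_pos_of_pmf hνp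
      have h1 : 1 ≤ (rvSupport ν Xstar).card :=
        Finset.card_pos.2 ⟨_, mem_rvSupport hω0⟩
      omega
    · intro Bstar hBsf hBsp
      exfalso
      obtain ⟨ω1, ω2, h1, h2, hne⟩ := exists_ne_of_shEntropy_pos hνp hBsp
      have hFDs : FnDep ν Xstar Bstar := (fnDep_iff hνp Bstar Xstar).2 hBsf
      have hXne : Xstar ω1 ≠ Xstar ω2 := fun hcc => hne (hFDs ω1 ω2 h1 h2 hcc)
      have h2le : 2 ≤ (rvSupport ν Xstar).card :=
        Finset.one_lt_card.2 ⟨_, mem_rvSupport h1, _, mem_rvSupport h2, hXne⟩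
      omega
  · have hn : 2 ≤ n := by
      have := NeZero.ne n
      omega
    refine ⟨?_, ?_, ?_, ?_, ?_, ?_⟩
    · intro a b hab
      exact ⟨shCond_pair_pos p ν B hp hsum hBent hab,
        shCond_pair_pos p ν B hp hsum hBent (Ne.symm hab)⟩
    · intro a
      exact entB_pos p ν B hp hsum hν0 hν1 hBent a
    · exact cardS_eq p ν Xstar B hp hsum hν0 hν1 hcard hBent hBfun hn
    · intro a
      exact cardB2 p ν Xstar B hp hsum hν0 hν1 hcard hBent hBfun hn a
    · exact completeness_part p ν Xstar B hp hsum hν0 hν1 hcard hBent hBfun hn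
    · exact indicator_part p ν Xstar B hp hsum hν0 hν1 hcard hBent hBfun hn
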